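/- arXiv:1809.07816 — 6 statements merged into one kernel-verified Lean document; each statement's English description precedes it below -/
import Mathlib

section
/- Let n ≥ 1. Every partial endomorphism of Z_{2n+1} other than the identity map of Z_{2n+1} equals, as a partial function on Z_{2n+1} (same domain and same values), a finite composition of the maps f_0, f_1, …, f_n, g. -/
/-- Sugihara implication on the integers. -/
def SImp (a b : ℤ) : ℤ := if a ≤ b then max (-a) b else min (-a) b

/-- The universe of the Sugihara algebra `Z_{2n+1}`. -/
def Zodd (n : ℕ) : Set ℤ := {a : ℤ | -(n : ℤ) ≤ a ∧ a ≤ (n : ℤ)}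

/-- The universe of the Sugihara algebra `Z_{2n}`. -/
def Zeven (n : ℕ) : Set ℤ := {a : ℤ | (-(n : ℤ) ≤ a ∧ a ≤ (n : ℤ)) ∧ a ≠ 0}

/-- `S` is a subalgebra of (the subset `Z` of) the Sugihara algebra on `ℤ`. -/
def Subalg (Z S : Set ℤ) : Prop :=
  S.Nonempty ∧ S ⊆ Z ∧
    ∀ a ∈ S, ∀ b ∈ S, min a b ∈ S ∧ max a b ∈ S ∧ -a ∈ S ∧ SImp a b ∈ S

/-- `h` is a homomorphism from `S` to `T` (preserving ∧, ∨, ¬, →). -/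
def SHom (S T : Set ℤ) (h : ℤ → ℤ) : Prop :=
  Set.MapsTo h S T ∧
    ∀ a ∈ S, ∀ b ∈ S,
      h (min a b) = min (h a) (h b) ∧ h (max a b) = max (h a) (h b) ∧
      h (-a) = -h a ∧ h (SImp a b) = SImp (h a) (h b)

/-- `h` with domain `D` is a partial endomorphism of (the algebra on) `Z`. -/
def PartialEnd (Z D : Set ℤ) (h : ℤ → ℤ) : Prop :=
  Subalg Z D ∧ Subalg Z (h '' D) ∧ SHom D (h '' D) h

/-- The partial endomorphism `f_i` of `Z_{2n+1}` (for `0 ≤ i ≤ n`), as a partial function. -/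
def fO (n i : ℕ) : ℤ →. ℤ :=
  PFun.res
    (fun a => if 2 ≤ i then
        (if a = (i : ℤ) - 1 then (i : ℤ) else if a = -((i : ℤ) - 1) then -(i : ℤ) else a)
      else a)
    (Zodd n \ {(i : ℤ), -(i : ℤ)})

/-- The endomorphism `g` of `Z_{2n+1}`, as a partial function with domain `Z_{2n+1}`. -/
def gO (n : ℕ) : ℤ →. ℤ :=
  PFun.res (fun a => if 0 < a then a - 1 else if a < 0 then a + 1 else 0) (Zodd n)

/-- The generating set `{f_0, f_1, …, f_n, g}`. -/
def GenOdd (n : ℕ) : Set (ℤ →. ℤ) :=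
  {p | (∃ i : ℕ, i ≤ n ∧ p = fO n i) ∨ p = gO n}

/-- Finite compositions of members of `G`. -/
inductive FinComp (G : Set (ℤ →. ℤ)) : (ℤ →. ℤ) → Prop
  | base {f : ℤ →. ℤ} : f ∈ G → FinComp G f
  | comp {f g : ℤ →. ℤ} : FinComp G f → FinComp G g → FinComp G (f.comp g)

structure Good (n : ℕ) (D : Set ℤ) (h : ℤ → ℤ) : Prop where
  ne : D.Nonempty
  sub : D ⊆ Zodd n
  symm : ∀ a ∈ D, -a ∈ D
  mono : ∀ a ∈ D, ∀ b ∈ D, a ≤ b → h a ≤ h b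
  odd : ∀ a ∈ D, h (-a) = - h a
  coll : ∀ a ∈ D, ∀ b ∈ D, a < b → h a = h b → h a = 0
  ran : ∀ a ∈ D, h a ∈ Zodd n

lemma good_of_pe {n : ℕ} {D : Set ℤ} {h : ℤ → ℤ} (hpe : PartialEnd (Zodd n) D h) :
    Good n D h := by
  obtain ⟨⟨hne, hsub, hcl⟩, ⟨-, hransub, -⟩, -, hpres⟩ := hpe
  refine ⟨hne, hsub, fun a ha => (hcl a ha a ha).2.2.1, ?_, fun a ha => (hpres a ha a ha).2.2.1,
    ?_, fun a ha => hransub ⟨a, ha, rfl⟩⟩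
  · intro a ha b hb hab
    have := (hpres a ha b hb).1
    rw [min_eq_left hab] at this
    rw [this]; exact min_le_right _ _
  · intro a ha b hb hab heq
    have hnb : -b ∈ D := (hcl b hb b hb).2.2.1
    have h1 := (hpres b hb a ha).2.2.2
    have h2 := (hpres (-b) hnb a ha).1
    have hob : h (-b) = - h b := (hpres b hb b hb).2.2.1
    rw [SImp, if_neg (by omega)] at h1
    rw [hob] at h2
    rw [h2] at h1
    rw [SImp, if_pos (le_of_eq heq.symm)] at h1
    rw [← heq] at h1
    rcases le_total (h a) 0 with hc | hc
    · rw [min_eq_right (by omega), max_eq_left (by omega)] at h1; omega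
    · rw [min_eq_left (by omega), max_eq_right (by omega)] at h1; omega

def Real' (n : ℕ) (D : Set ℤ) (h : ℤ → ℤ) : Prop :=
  ∃ φ : ℤ →. ℤ, FinComp (GenOdd n) φ ∧ φ.Dom = D ∧ ∀ a ∈ D, h a ∈ φ a

lemma mem_comp' (f g : ℤ →. ℤ) (a c : ℤ) :
    c ∈ f.comp g a ↔ ∃ b, b ∈ g a ∧ c ∈ f b := by
  rw [PFun.comp_apply]; exact Part.mem_bind_iff

lemma dom_res (f : ℤ → ℤ) (S : Set ℤ) : (PFun.res f S).Dom = S := by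
  ext x; simp [PFun.mem_dom, PFun.mem_res]

lemma realBase {n : ℕ} {D : Set ℤ} {h f : ℤ → ℤ} {S : Set ℤ}
    (hgen : FinComp (GenOdd n) (PFun.res f S)) (hD : S = D)
    (heq : ∀ a ∈ D, h a = f a) : Real' n D h := by
  refine ⟨PFun.res f S, hgen, by rw [dom_res, hD], fun a ha => ?_⟩
  rw [PFun.mem_res]; exact ⟨hD ▸ ha, (heq a ha).symm⟩

lemma realL {n : ℕ} {D : Set ℤ} {u h f : ℤ → ℤ} {S : Set ℤ}
    (hgen : FinComp (GenOdd n) (PFun.res f S)) (hu : Real' n D u)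
    (hmem : ∀ a ∈ D, u a ∈ S) (heq : ∀ a ∈ D, h a = f (u a)) : Real' n D h := by
  obtain ⟨φ, hφ, hdom, hval⟩ := hu
  refine ⟨(PFun.res f S).comp φ, FinComp.comp hgen hφ, ?_, fun a ha => ?_⟩
  · ext x
    simp only [PFun.mem_dom, mem_comp', PFun.mem_res]
    constructor
    · rintro ⟨y, b, hb, -⟩
      rw [← hdom]; exact Part.dom_iff_mem.2 ⟨b, hb⟩
    · intro hx
      exact ⟨f (u x), u x, hval x hx, hmem x hx, rfl⟩
  · rw [mem_comp']
    exact ⟨u a, hval a ha, (PFun.mem_res _ _ _ _).2 ⟨hmem a ha, (heq a ha).symm⟩⟩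

lemma realR {n : ℕ} {D D' : Set ℤ} {u h f : ℤ → ℤ} {S : Set ℤ}
    (hgen : FinComp (GenOdd n) (PFun.res f S)) (hu : Real' n D' u)
    (hdom : ∀ x, x ∈ D ↔ x ∈ S ∧ f x ∈ D')
    (heq : ∀ a ∈ D, h a = u (f a)) : Real' n D h := by
  obtain ⟨φ, hφ, hdomφ, hval⟩ := hu
  refine ⟨φ.comp (PFun.res f S), FinComp.comp hφ hgen, ?_, fun a ha => ?_⟩
  · ext x
    simp only [PFun.mem_dom, mem_comp', PFun.mem_res]
    constructor
    · rintro ⟨y, b, ⟨hxS, rfl⟩, hy⟩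
      refine (hdom x).2 ⟨hxS, ?_⟩
      rw [← hdomφ]; exact Part.dom_iff_mem.2 ⟨y, hy⟩
    · intro hx
      obtain ⟨hxS, hfx⟩ := (hdom x).1 hx
      exact ⟨u (f x), f x, ⟨hxS, rfl⟩, hval _ hfx⟩
  · rw [mem_comp']
    obtain ⟨haS, hfa⟩ := (hdom a).1 ha
    exact ⟨f a, (PFun.mem_res _ _ _ _).2 ⟨haS, rfl⟩, heq a ha ▸ hval _ hfa⟩

lemma gen_g (n : ℕ) : FinComp (GenOdd n) (gO n) := FinComp.base (Or.inr rfl)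

lemma gen_f (n i : ℕ) (hi : i ≤ n) : FinComp (GenOdd n) (fO n i) :=
  FinComp.base (Or.inl ⟨i, hi, rfl⟩)

lemma fO_eq_res (n : ℕ) {v : ℤ} (h2 : 2 ≤ v) :
    fO n v.toNat = PFun.res
      (fun a => if a = v - 1 then v else if a = -(v-1) then -v else a)
      (Zodd n \ {v, -v}) := by
  have hc : ((v.toNat : ℕ) : ℤ) = v := Int.toNat_of_nonneg (by omega)
  have h2' : 2 ≤ v.toNat := by omega
  simp only [fO, if_pos h2', hc]

lemma fO_zero (n : ℕ) : fO n 0 = PFun.res (fun a => a) (Zodd n \ {0}) := by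
  have : ¬ (2 ≤ 0) := by norm_num
  simp only [fO, if_neg this, Nat.cast_zero, neg_zero, Set.pair_eq_singleton]

lemma fO_one (n : ℕ) : fO n 1 = PFun.res (fun a => a) (Zodd n \ {1, -1}) := by
  have : ¬ (2 ≤ 1) := by norm_num
  simp only [fO, if_neg this, Nat.cast_one]

open scoped Classical in
noncomputable def mu0 (n : ℕ) (D : Set ℤ) : ℕ :=
  ∑ x ∈ Finset.Icc (0:ℤ) n, if x ∈ D then 0 else (x+1).toNat

open scoped Classical in
noncomputable def sM (n : ℕ) (D : Set ℤ) (h : ℤ → ℤ) : ℕ :=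
  (Finset.Icc (1:ℤ) n).sup fun a => if a ∈ D then (a - h a).toNat else 0

open scoped Classical in
noncomputable def mu1 (n : ℕ) (D : Set ℤ) (h : ℤ → ℤ) : ℕ :=
  ∑ a ∈ Finset.Icc (1:ℤ) n, if a ∈ D then (h a).toNat else 0

noncomputable def mu (n : ℕ) (D : Set ℤ) (h : ℤ → ℤ) : ℕ :=
  (mu0 n D * (n+1) + sM n D h) * (n*n+1) + mu1 n D h

lemma Good.hpos {n D h} (g : Good n D h) : ∀ a ∈ D, 0 ≤ a → 0 ≤ h a := by
  intro a ha ha0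
  have h1 := g.mono (-a) (g.symm a ha) a ha (by omega)
  have h2 := g.odd a ha
  omega

lemma Good.hneg {n D h} (g : Good n D h) : ∀ a ∈ D, a ≤ 0 → h a ≤ 0 := by
  intro a ha ha0
  have h1 := g.mono a ha (-a) (g.symm a ha) (by omega)
  have h2 := g.odd a ha
  omega

lemma sM_le {n D h} (g : Good n D h) : sM n D h ≤ n := by
  classical
  apply Finset.sup_le
  intro a ha
  rw [Finset.mem_Icc] at ha
  split
  · next haD =>
    have := g.hpos a haD (by omega)
    omega
  · omega

lemma mu1_le {n D h} (g : Good n D h) : mu1 n D h ≤ n * n := by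
  classical
  have : mu1 n D h ≤ (Finset.Icc (1:ℤ) n).card • n := by
    apply Finset.sum_le_card_nsmul
    intro a ha
    rw [Finset.mem_Icc] at ha
    split
    · next haD =>
      have := (g.ran a haD).2
      omega
    · omega
  rw [Int.card_Icc] at this
  simp only [smul_eq_mul] at this
  have hc : ((n:ℤ) + 1 - 1).toNat = n := by omega
  rw [hc] at this
  exact this

lemma mu_lt_aux {n X Y m m' : ℕ} (hm' : m' ≤ n*n)
    (hlex : X + 1 ≤ Y ∨ (X ≤ Y ∧ m' < m)) :
    X * (n*n+1) + m' < Y * (n*n+1) + m := by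
  rcases hlex with hXY | ⟨hXY, hmm⟩
  · calc X * (n*n+1) + m' < (X+1) * (n*n+1) := by nlinarith
      _ ≤ Y * (n*n+1) := Nat.mul_le_mul_right _ hXY
      _ ≤ Y * (n*n+1) + m := Nat.le_add_right _ _
  · have : X * (n*n+1) ≤ Y * (n*n+1) := Nat.mul_le_mul_right _ hXY
    omega

lemma mu_lt0 {n D D' h h'} (g' : Good n D' h')
    (h0 : mu0 n D' < mu0 n D) : mu n D' h' < mu n D h := by
  apply mu_lt_aux (mu1_le g')
  left
  have hs' := sM_le g'
  have : (mu0 n D' + 1) * (n+1) ≤ mu0 n D * (n+1) := Nat.mul_le_mul_right _ h0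
  nlinarith

lemma mu_lt1 {n D h h'} (g' : Good n D h')
    (h0 : sM n D h' < sM n D h) : mu n D h' < mu n D h := by
  apply mu_lt_aux (mu1_le g')
  left
  omega

lemma mu_lt2 {n D h h'} (g' : Good n D h')
    (h0 : sM n D h' ≤ sM n D h) (h1 : mu1 n D h' < mu1 n D h) :
    mu n D h' < mu n D h := by
  apply mu_lt_aux (mu1_le g')
  right
  constructor
  · omega
  · exact h1

lemma Good.smono {n D h} (g : Good n D h) {a b : ℤ} (ha : a ∈ D) (hb : b ∈ D)
    (hlt : h a < h b) : a < b := by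
  by_contra hc
  have := g.mono b hb a ha (by omega); omega

lemma Good.posOfVal {n D h} (g : Good n D h) {b : ℤ} (hb : b ∈ D) (h1 : 1 ≤ h b) :
    0 < b := by
  by_contra hc
  have := g.hneg b hb (by omega); omega

lemma nogaps {n : ℕ} {D : Set ℤ} {h : ℤ → ℤ} (g : Good n D h) {a0 : ℤ}
    (ha0 : a0 ∈ D) (h0 : 0 < a0) (hlt : h a0 < a0)
    (hng : ∀ b ∈ D, 2 ≤ h b → ∃ a ∈ D, h a = h b - 1 ∨ h a = -(h b - 1)) :
    ∀ b ∈ D, h b < n := by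
  have hp0 : 0 ≤ h a0 := g.hpos a0 ha0 (by omega)
  have key : ∀ j : ℕ, ∀ a ∈ D, 0 < a → h a = h a0 + 1 + j → h a + (a0 - h a0) ≤ a := by
    intro j
    induction j with
    | zero =>
      intro a ha _ hv
      have : a0 < a := g.smono ha0 ha (by omega)
      omega
    | succ j ih =>
      intro a ha _ hv
      push_cast at hv
      have h2 : 2 ≤ h a := by omega
      obtain ⟨a', ha', hval⟩ := hng a ha h2
      obtain ⟨b', hb', hpb', hvb'⟩ : ∃ b' ∈ D, 0 < b' ∧ h b' = h a - 1 := by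
        rcases hval with hval | hval
        · exact ⟨a', ha', g.posOfVal ha' (by omega), hval⟩
        · refine ⟨-a', g.symm a' ha', g.posOfVal (g.symm a' ha') ?_, ?_⟩ <;>
            rw [g.odd a' ha'] <;> omega
      have hih := ih b' hb' hpb' (by omega)
      have : b' < a := g.smono hb' ha (by omega)
      omega
  intro b hb
  by_contra hc
  have hbn : h b = n := by have := (g.ran b hb).2; omega
  have hb1 : 1 ≤ (n:ℤ) := by have := (g.sub ha0).2; omega
  have hbpos : 0 < b := g.posOfVal hb (by omega)
  have hj : (n:ℤ) = h a0 + 1 + ((n - (h a0 + 1)).toNat : ℤ) := by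
    have := (g.sub ha0).2; omega
  have := key (n - (h a0 + 1)).toNat b hb hbpos (by omega)
  have := (g.sub hb).2
  omega

lemma gaptop {n : ℕ} {D : Set ℤ} {h : ℤ → ℤ} (g : Good n D h) {a0 b0 : ℤ}
    (ha0 : a0 ∈ D) (h0 : 0 < a0) (hlt : h a0 < a0) (hb0 : b0 ∈ D) (hvb0 : h b0 = n) :
    ∃ b ∈ D, 0 < b ∧ 2 ≤ h b ∧ b ≤ h b ∧ ∀ a ∈ D, h a ≠ h b - 1 ∧ h a ≠ -(h b - 1) := by
  have hb0pos : 0 < b0 := g.posOfVal hb0 (by have := (g.sub ha0).2; omega)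
  have hSne : ∃ v : ℤ, 2 ≤ v ∧ v ≤ n ∧ (∃ b ∈ D, 0 < b ∧ h b = v) ∧
      (∀ a ∈ D, h a ≠ v - 1 ∧ h a ≠ -(v-1)) := by
    by_contra hc
    push_neg at hc
    refine absurd (nogaps g ha0 h0 hlt ?_ b0 hb0) (by have := (g.sub ha0).2; omega)
    intro b hb h2
    have hbpos : 0 < b := g.posOfVal hb (by omega)
    have := hc (h b) h2 (g.ran b hb).2 ⟨b, hb, hbpos, rfl⟩
    obtain ⟨a, ha, hval⟩ := this
    exact ⟨a, ha, by tauto⟩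
  obtain ⟨v, ⟨hv2, hvn, hwit, hgap⟩, hmax⟩ :=
    Int.exists_greatest_of_bdd (P := fun v => 2 ≤ v ∧ v ≤ n ∧ (∃ b ∈ D, 0 < b ∧ h b = v) ∧
      (∀ a ∈ D, h a ≠ v - 1 ∧ h a ≠ -(v-1))) ⟨n, fun z hz => hz.2.1⟩ hSne
  have chain : ∀ j : ℕ, v ≤ (n:ℤ) - j → ∃ b ∈ D, 0 < b ∧ h b = (n:ℤ) - j ∧ b ≤ (n:ℤ) - j := by
    intro j
    induction j with
    | zero =>
      intro _
      exact ⟨b0, hb0, hb0pos, by omega, by have := (g.sub hb0).2; omega⟩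
    | succ j ih =>
      intro hvj
      push_cast at hvj ⊢
      obtain ⟨b, hb, hbpos, hbv, hble⟩ := ih (by omega)
      have hnotgap : ¬(∀ a ∈ D, h a ≠ ((n:ℤ) - j) - 1 ∧ h a ≠ -(((n:ℤ) - j)-1)) := by
        intro hgap'
        have := hmax ((n:ℤ) - j) ⟨by omega, by omega, ⟨b, hb, hbpos, hbv⟩, hgap'⟩
        omega
      push_neg at hnotgap
      obtain ⟨a, ha, hval⟩ := hnotgap
      have hval' : h a = (n:ℤ) - j - 1 ∨ h a = -((n:ℤ) - j - 1) := by tauto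
      obtain ⟨b', hb', hpb', hvb'⟩ : ∃ b' ∈ D, 0 < b' ∧ h b' = (n:ℤ) - j - 1 := by
        rcases hval' with hv | hv
        · exact ⟨a, ha, g.posOfVal ha (by omega), hv⟩
        · refine ⟨-a, g.symm a ha, g.posOfVal (g.symm a ha) ?_, ?_⟩ <;>
            rw [g.odd a ha] <;> omega
      have : b' < b := g.smono hb' hb (by omega)
      exact ⟨b', hb', hpb', by omega, by omega⟩
  obtain ⟨b, hb, hbpos, hbv, hble⟩ := chain (n - v).toNat (by omega)
  have hveq : h b = v := by omega
  exact ⟨b, hb, hbpos, by omega, by omega, by rw [hveq]; exact hgap⟩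

lemma gapexp {n : ℕ} {D : Set ℤ} {h : ℤ → ℤ} (g : Good n D h)
    (hexp : ∀ a ∈ D, 0 < a → a ≤ h a) {b1 : ℤ} (hb1 : b1 ∈ D) (hp1 : 0 < b1)
    (hlt : b1 < h b1) :
    ∃ b ∈ D, 0 < b ∧ 2 ≤ h b ∧ b < h b ∧ ∀ a ∈ D, h a ≠ h b - 1 ∧ h a ≠ -(h b - 1) := by
  obtain ⟨b, ⟨hb, hbpos, hblt⟩, hmin⟩ :=
    Int.exists_least_of_bdd (P := fun b => b ∈ D ∧ 0 < b ∧ b < h b)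
      ⟨0, fun z hz => le_of_lt hz.2.1⟩ ⟨b1, hb1, hp1, hlt⟩
  have hgap1 : ∀ a ∈ D, h a ≠ h b - 1 := by
    intro a ha hva
    have hapos : 0 < a := g.posOfVal ha (by omega)
    have hab : a < b := by
      by_contra hc
      rcases eq_or_lt_of_le (not_lt.1 hc : b ≤ a) with rfl | hlt2
      · omega
      · have := g.mono b hb a ha (by omega); omega
    have := hmin a
    have : ¬(a ∈ D ∧ 0 < a ∧ a < h a) := fun hc => by have := hmin a hc; omega
    have hle : h a ≤ a := by
      by_contra hc2
      exact this ⟨ha, hapos, by omega⟩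
    omega
  refine ⟨b, hb, hbpos, by omega, hblt, fun a ha => ⟨hgap1 a ha, fun hva => ?_⟩⟩
  have := hgap1 (-a) (g.symm a ha)
  rw [g.odd a ha] at this
  omega

lemma mem_Zodd {n : ℕ} {a : ℤ} : a ∈ Zodd n ↔ -(n:ℤ) ≤ a ∧ a ≤ n := Iff.rfl

lemma sM_ge {n : ℕ} {D : Set ℤ} {h : ℤ → ℤ} {a : ℤ} (ha : a ∈ D) (h1 : 1 ≤ a)
    (h2 : a ≤ n) : (a - h a).toNat ≤ sM n D h := by
  classical
  have hm : a ∈ Finset.Icc (1:ℤ) n := Finset.mem_Icc.2 ⟨h1, h2⟩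
  have h3 := Finset.le_sup (f := fun a => if a ∈ D then (a - h a).toNat else 0) hm
  have h4 : (if a ∈ D then (a - h a).toNat else 0) ≤ sM n D h := h3
  rwa [if_pos ha] at h4

lemma peelF {n : ℕ} {D : Set ℤ} {h h' : ℤ → ℤ} (g : Good n D h) {b : ℤ} (hb : b ∈ D)
    (hbpos : 0 < b) (h2 : 2 ≤ h b)
    (hgap : ∀ a ∈ D, h a ≠ h b - 1 ∧ h a ≠ -(h b - 1))
    (hh' : ∀ a, h' a = if a = b then h b - 1 else if a = -b then 1 - h b else h a) :
    Good n D h' ∧ (Real' n D h' → Real' n D h) ∧ (mu1 n D h' < mu1 n D h) ∧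
    ((b - h b + 1).toNat ≤ sM n D h → sM n D h' ≤ sM n D h) ∧
    ¬(D = Zodd n ∧ ∀ a ∈ D, h' a = a) := by
  classical
  have hbn : b ≤ (n:ℤ) := (g.sub hb).2
  have hvn : h b ≤ (n:ℤ) := (g.ran b hb).2
  have hnb : -b ∈ D := g.symm b hb
  have hob : h (-b) = - h b := g.odd b hb
  have hvb : h' b = h b - 1 := by rw [hh' b, if_pos rfl]
  have hvnb : h' (-b) = 1 - h b := by rw [hh' (-b), if_neg (by omega), if_pos rfl]
  have hvo : ∀ a, a ≠ b → a ≠ -b → h' a = h a := by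
    intro a hab hanb; rw [hh' a, if_neg hab, if_neg hanb]
  have hinj : ∀ a ∈ D, a ≠ b → h a ≠ h b := by
    intro a ha hne heq
    rcases lt_or_gt_of_ne hne with hlt | hlt
    · have := g.coll a ha b hb hlt heq; omega
    · have := g.coll b hb a ha hlt heq.symm; omega
  have hinj' : ∀ a ∈ D, a ≠ -b → h a ≠ -h b := by
    intro a ha hne heq
    have := hinj (-a) (g.symm a ha) (by omega)
    rw [g.odd a ha] at this
    omega
  have hA : ∀ a ∈ D, a ≠ b → a < b → h a ≤ h b - 2 := by
    intro a ha hne hlt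
    have := g.mono a ha b hb (le_of_lt hlt)
    have := hinj a ha hne
    have := (hgap a ha).1
    omega
  have hB : ∀ a ∈ D, a ≠ b → b < a → h b + 1 ≤ h a := by
    intro a ha hne hlt
    have := g.mono b hb a ha (le_of_lt hlt)
    have := hinj a ha hne
    omega
  have hC : ∀ a ∈ D, a ≠ -b → a < -b → h a ≤ -h b - 1 := by
    intro a ha hne hlt
    have := g.mono a ha (-b) hnb (le_of_lt hlt)
    have := hinj' a ha hne
    omega
  have hD : ∀ a ∈ D, a ≠ -b → -b < a → -h b + 2 ≤ h a := by
    intro a ha hne hlt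
    have := g.mono (-b) hnb a ha (le_of_lt hlt)
    have := hinj' a ha hne
    have := (hgap a ha).2
    omega
  -- key pointwise comparison
  have hcmp : ∀ x ∈ D, ∀ y ∈ D, x < y → h' x < h' y ∨ (h' x = h x ∧ h' y = h y) := by
    intro x hx y hy hxy
    rcases eq_or_ne x b with rfl | hxb
    · rcases eq_or_ne y (-x) with rfl | hynb
      · omega
      · left
        rw [hvb, hvo y (by omega) hynb]
        have := hB y hy (by omega) (by omega)
        omega
    · rcases eq_or_ne x (-b) with rfl | hxnb
      · rcases eq_or_ne y b with rfl | hyb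
        · left; rw [hvb, hvnb]; omega
        · rcases eq_or_ne y (-b) with rfl | hynb
          · omega
          · left
            rw [hvnb, hvo y hyb hynb]
            have := hD y hy hynb (by omega)
            omega
      · rcases eq_or_ne y b with rfl | hyb
        · left
          rw [hvb, hvo x hxb hxnb]
          have := hA x hx hxb (by omega)
          omega
        · rcases eq_or_ne y (-b) with rfl | hynb
          · left
            rw [hvnb, hvo x hxb hxnb]
            have := hC x hx hxnb (by omega)
            omega
          · exact Or.inr ⟨hvo x hxb hxnb, hvo y hyb hynb⟩
  have hgood : Good n D h' := by
    refine ⟨g.ne, g.sub, g.symm, ?_, ?_, ?_, ?_⟩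
    · intro x hx y hy hxy
      rcases eq_or_lt_of_le hxy with rfl | hlt
      · omega
      · rcases hcmp x hx y hy hlt with hc | ⟨e1, e2⟩
        · omega
        · rw [e1, e2]; exact g.mono x hx y hy hxy
    · intro a ha
      rcases eq_or_ne a b with rfl | hab
      · rw [hvnb, hvb]; omega
      · rcases eq_or_ne a (-b) with rfl | hanb
        · rw [neg_neg, hvb, hvnb]; omega
        · rw [hvo (-a) (by omega) (by omega), hvo a hab hanb]
          exact g.odd a ha
    · intro x hx y hy hxy heq
      rcases hcmp x hx y hy hxy with hc | ⟨e1, e2⟩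
      · omega
      · rw [e1, e2] at heq
        rw [e1]
        exact g.coll x hx y hy hxy heq
    · intro a ha
      rw [mem_Zodd]
      rcases eq_or_ne a b with rfl | hab
      · rw [hvb]; omega
      · rcases eq_or_ne a (-b) with rfl | hanb
        · rw [hvnb]; omega
        · rw [hvo a hab hanb]
          have := g.ran a ha
          rw [mem_Zodd] at this
          omega
  refine ⟨hgood, ?_, ?_, ?_, ?_⟩
  · intro hreal
    have hgen := gen_f n (h b).toNat (by omega)
    rw [fO_eq_res n h2] at hgen
    refine realL hgen hreal ?_ ?_
    · intro a ha
      refine ⟨hgood.ran a ha, ?_⟩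
      simp only [Set.mem_insert_iff, Set.mem_singleton_iff]
      rcases eq_or_ne a b with rfl | hab
      · rw [hvb]; omega
      · rcases eq_or_ne a (-b) with rfl | hanb
        · rw [hvnb]; omega
        · rw [hvo a hab hanb]
          have := hinj a ha hab
          have := hinj' a ha hanb
          omega
    · intro a ha
      rcases eq_or_ne a b with rfl | hab
      · rw [hvb]
        simp
      · rcases eq_or_ne a (-b) with rfl | hanb
        · rw [hvnb]
          rw [if_neg (by omega), if_pos (by ring)]
          exact hob
        · rw [hvo a hab hanb]
          rw [if_neg (hgap a ha).1, if_neg (by have := (hgap a ha).2; omega)]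
  · apply Finset.sum_lt_sum
    · intro a hmem
      by_cases haD : a ∈ D
      · rw [if_pos haD, if_pos haD]
        rw [Finset.mem_Icc] at hmem
        rcases eq_or_ne a b with rfl | hab
        · rw [hvb]; omega
        · rw [hvo a hab (by omega)]
      · rw [if_neg haD, if_neg haD]
    · refine ⟨b, Finset.mem_Icc.2 ⟨by omega, hbn⟩, ?_⟩
      rw [if_pos hb, if_pos hb, hvb]
      omega
  · intro hterm
    apply Finset.sup_le
    intro a hmem
    rw [Finset.mem_Icc] at hmem
    by_cases haD : a ∈ D
    · rw [if_pos haD]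
      rcases eq_or_ne a b with rfl | hab
      · rw [hvb]
        calc (a - (h a - 1)).toNat = (a - h a + 1).toNat := by omega
          _ ≤ sM n D h := hterm
      · rw [hvo a hab (by omega)]
        exact sM_ge haD hmem.1 hmem.2
    · rw [if_neg haD]; omega
  · rintro ⟨hDeq, hid'⟩
    have hb' := hid' b hb
    rw [hvb] at hb'
    have hb1n : b + 1 ≤ (n:ℤ) := by omega
    have hb1D : b + 1 ∈ D := by
      rw [hDeq]; rw [mem_Zodd]; omega
    have he2 := hid' (b+1) hb1D
    rw [hvo (b+1) (by omega) (by omega)] at he2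
    have := g.coll b hb (b+1) hb1D (by omega) (by omega)
    omega

lemma peelG {n : ℕ} {D : Set ℤ} {h h' : ℤ → ℤ} (g : Good n D h)
    {a1 : ℤ} (ha1 : a1 ∈ D) (ha1p : 0 < a1) (ha1lt : h a1 < a1)
    (hmax : ∀ a ∈ D, 0 < a → h a ≤ (n:ℤ) - 1)
    {a0 : ℤ}
    (ha0 : (a0 = 0 ∧ ∀ a ∈ D, 0 < a → h a ≠ 0) ∨
           (a0 ∈ D ∧ 0 < a0 ∧ h a0 = 0 ∧ ∀ a ∈ D, 0 < a → h a = 0 → a ≤ a0))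
    (hh' : ∀ a, h' a = if 0 < a0 ∧ a = a0 then 1 else if 0 < a0 ∧ a = -a0 then -1 else
        (if 0 < h a then h a + 1 else if h a < 0 then h a - 1 else 0)) :
    Good n D h' ∧ (Real' n D h' → Real' n D h) ∧ (sM n D h' < sM n D h) ∧
    ((∀ a ∈ D, h' a = a) →
      ∀ a ∈ D, h a = if 0 < a then a - 1 else if a < 0 then a + 1 else 0) := by
  classical
  have hn1 : 1 ≤ (n:ℤ) := by have := (g.sub ha1).2; omega
  have hzD : 0 ∈ D → h 0 = 0 := by
    intro h0
    have := g.odd 0 h0; simp at this; omega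
  have hza : ∀ a ∈ D, 0 < a → h a = 0 → (0 < a0 ∧ a ≤ a0) := by
    intro a ha hap haz
    rcases ha0 with ⟨-, hne⟩ | ⟨-, hp, -, hgr⟩
    · exact absurd haz (hne a ha hap)
    · exact ⟨hp, hgr a ha hap haz⟩
  have ha0madeD : 0 < a0 → a0 ∈ D ∧ h a0 = 0 := by
    intro hp
    rcases ha0 with ⟨h0, -⟩ | ⟨hmem, -, hz, -⟩
    · omega
    · exact ⟨hmem, hz⟩
  have hpos' : ∀ a ∈ D, 0 < a →
      (h' a = h a + 1 ∧ 1 ≤ h a) ∨ (h' a = 0 ∧ h a = 0 ∧ a < a0) ∨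
      (h' a = 1 ∧ h a = 0 ∧ a = a0 ∧ 0 < a0) := by
    intro a ha hap
    have hge := g.hpos a ha (by omega)
    rcases eq_or_lt_of_le hge with hz | hpos
    · obtain ⟨hp0, hle⟩ := hza a ha hap hz.symm
      rcases eq_or_lt_of_le hle with rfl | hlt
      · right; right
        rw [hh' a, if_pos ⟨hp0, rfl⟩]
        omega
      · right; left
        rw [hh' a, if_neg (by omega), if_neg (by omega), if_neg (by omega),
          if_neg (by omega)]
        omega
    · left
      have hne0 : ¬(0 < a0 ∧ a = a0) := by
        intro ⟨hp0, he⟩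
        subst he
        have := (ha0madeD hp0).2
        omega
      have hne1 : ¬(0 < a0 ∧ a = -a0) := by omega
      rw [hh' a, if_neg hne0, if_neg hne1, if_pos (by omega)]
      omega
  have hzero' : 0 ∈ D → h' 0 = 0 := by
    intro h0
    have := hzD h0
    rw [hh' 0, if_neg (by omega), if_neg (by omega), if_neg (by omega),
      if_neg (by omega)]
  have hodd' : ∀ a ∈ D, h' (-a) = - h' a := by
    intro a ha
    have hoa := g.odd a ha
    rw [hh' (-a), hh' a, hoa]
    split_ifs <;> omega
  have posmono : ∀ x ∈ D, ∀ y ∈ D, 0 < x → x ≤ y → h' x ≤ h' y := by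
    intro x hx y hy hx0 hxy
    have hmxy := g.mono x hx y hy hxy
    rcases hpos' x hx hx0 with h1 | h1 | h1 <;>
      rcases hpos' y hy (by omega) with h2 | h2 | h2 <;> omega
  have hnonnegpos : ∀ y ∈ D, 0 ≤ y → 0 ≤ h' y := by
    intro y hy hy0
    rcases eq_or_lt_of_le hy0 with rfl | hpos
    · rw [hzero' hy]
    · rcases hpos' y hy hpos with h1 | h1 | h1 <;> omega
  have hmono : ∀ x ∈ D, ∀ y ∈ D, x ≤ y → h' x ≤ h' y := by
    intro x hx y hy hxy
    rcases lt_or_ge 0 x with hx0 | hx0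
    · exact posmono x hx y hy hx0 hxy
    · rcases le_or_gt y 0 with hy0 | hy0
      · -- both ≤ 0
        have h1 : h' (-y) ≤ h' (-x) := by
          rcases eq_or_lt_of_le hy0 with rfl | hyneg
          · rcases eq_or_lt_of_le (hxy : x ≤ 0) with rfl | hxneg
            · simp
            · simp only [neg_zero]
              rw [hzero' hy]
              exact hnonnegpos (-x) (g.symm x hx) (by omega)
          · exact posmono (-y) (g.symm y hy) (-x) (g.symm x hx) (by omega) (by omega)
        rw [hodd' x hx, hodd' y hy] at h1
        omega
      · have h1 : 0 ≤ h' y := hnonnegpos y hy (by omega)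
        have h2 : 0 ≤ h' (-x) := hnonnegpos (-x) (g.symm x hx) (by omega)
        rw [hodd' x hx] at h2
        omega
  have poscoll : ∀ x ∈ D, ∀ y ∈ D, 0 < x → x < y → h' x = h' y → h' x = 0 := by
    intro x hx y hy hx0 hxy heq
    rcases hpos' x hx hx0 with h1 | h1 | h1 <;>
      rcases hpos' y hy (by omega) with h2 | h2 | h2
    · have := g.coll x hx y hy hxy (by omega); omega
    all_goals omega
  have hcoll : ∀ x ∈ D, ∀ y ∈ D, x < y → h' x = h' y → h' x = 0 := by
    intro x hx y hy hxy heq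
    rcases lt_or_ge 0 x with hx0 | hx0
    · exact poscoll x hx y hy hx0 hxy heq
    · rcases le_or_gt y 0 with hy0 | hy0
      · rcases eq_or_lt_of_le hy0 with rfl | hyneg
        · rw [heq, hzero' hy]
        · have := poscoll (-y) (g.symm y hy) (-x) (g.symm x hx) (by omega) (by omega)
            (by rw [hodd' x hx, hodd' y hy]; omega)
          rw [hodd' y hy] at this
          omega
      · have h1 : 0 ≤ h' y := hnonnegpos y hy (by omega)
        have h2 : 0 ≤ h' (-x) := hnonnegpos (-x) (g.symm x hx) (by omega)
        rw [hodd' x hx] at h2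
        omega
  have hran : ∀ a ∈ D, h' a ∈ Zodd n := by
    intro a ha
    rw [mem_Zodd]
    rcases lt_trichotomy a 0 with ha0' | rfl | ha0'
    · have h1 := hodd' a ha
      have h2 := hmax (-a) (g.symm a ha) (by omega)
      rcases hpos' (-a) (g.symm a ha) (by omega) with h3 | h3 | h3 <;> omega
    · rw [hzero' ha]; omega
    · have h2 := hmax a ha (by omega)
      rcases hpos' a ha (by omega) with h3 | h3 | h3 <;> omega
  have hgood : Good n D h' := ⟨g.ne, g.sub, g.symm, hmono, hodd', hcoll, hran⟩
  have hfix : ∀ a ∈ D, h a = if 0 < h' a then h' a - 1 else if h' a < 0 then h' a + 1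
      else 0 := by
    intro a ha
    rcases lt_trichotomy a 0 with ha0' | rfl | ha0'
    · have h1 := hodd' a ha
      have h2 := g.odd a ha
      rcases hpos' (-a) (g.symm a ha) (by omega) with h3 | h3 | h3 <;>
        split_ifs <;> omega
    · have := hzero' ha
      have := hzD ha
      split_ifs <;> omega
    · rcases hpos' a ha (by omega) with h3 | h3 | h3 <;> split_ifs <;> omega
  refine ⟨hgood, ?_, ?_, ?_⟩
  · intro hreal
    exact realL (gen_g n) hreal (fun a ha => hran a ha) hfix
  · have hsge : 1 ≤ sM n D h := by
      have := sM_ge (h := h) ha1 (by omega) ((g.sub ha1).2)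
      omega
    have hsle : sM n D h' ≤ sM n D h - 1 := by
      apply Finset.sup_le
      intro a hmem
      rw [Finset.mem_Icc] at hmem
      by_cases haD : a ∈ D
      · rw [if_pos haD]
        have hsga := sM_ge (h := h) haD hmem.1 hmem.2
        rcases hpos' a haD (by omega) with h3 | h3 | h3
        · omega
        · -- h' a = 0, a < a0 : use bound at a0
          obtain ⟨ha0D, ha0z⟩ := ha0madeD (by omega)
          have hsga0 : (a0 - h a0).toNat ≤ sM n D h :=
            sM_ge (h := h) ha0D (by omega) ((g.sub ha0D).2)
          omega
        · obtain ⟨ha0D, ha0z⟩ := ha0madeD (by omega)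
          have hsga0 : (a0 - h a0).toNat ≤ sM n D h :=
            sM_ge (h := h) ha0D (by omega) ((g.sub ha0D).2)
          omega
      · rw [if_neg haD]; omega
    omega
  · intro hfulid a ha
    have := hfix a ha
    rw [hfulid a ha] at this
    exact this

lemma peelH1 {n : ℕ} {D : Set ℤ} {h : ℤ → ℤ} (g : Good n D h) (hn : 1 ≤ n)
    (hid : ∀ a ∈ D, h a = a) (h1D : (1:ℤ) ∉ D) :
    Good n (D ∪ {1, -1}) (fun a => a) ∧
    (Real' n (D ∪ {1, -1}) (fun a => a) → Real' n D h) ∧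
    mu0 n (D ∪ {1, -1}) < mu0 n D := by
  classical
  have hm1D : (-1:ℤ) ∉ D := fun hc => h1D (by simpa using g.symm _ hc)
  have hsub : D ∪ {1, -1} ⊆ Zodd n := by
    intro a ha
    rcases ha with ha | ha
    · exact g.sub ha
    · simp only [Set.mem_insert_iff, Set.mem_singleton_iff] at ha
      rcases ha with rfl | rfl <;> rw [mem_Zodd] <;> omega
  have hgood : Good n (D ∪ {1, -1}) (fun a => a) := by
    refine ⟨⟨1, Or.inr (by simp)⟩, hsub, ?_, fun a _ b _ hab => hab, fun a _ => rfl,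
      fun a _ b _ hab he => absurd he (by omega), fun a ha => hsub ha⟩
    · intro a ha
      rcases ha with ha | ha
      · exact Or.inl (g.symm a ha)
      · simp only [Set.mem_insert_iff, Set.mem_singleton_iff] at ha
        refine Or.inr ?_
        simp only [Set.mem_insert_iff, Set.mem_singleton_iff]
        omega
  refine ⟨hgood, ?_, ?_⟩
  · intro hreal
    have hgen := gen_f n 1 hn
    rw [fO_one n] at hgen
    refine realR hgen hreal ?_ ?_
    · intro y
      constructor
      · intro hy
        refine ⟨⟨g.sub hy, ?_⟩, Or.inl hy⟩
        simp only [Set.mem_insert_iff, Set.mem_singleton_iff]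
        rintro (rfl | rfl)
        · exact h1D hy
        · exact hm1D hy
      · rintro ⟨⟨hyz, hyne⟩, hy | hy⟩
        · exact hy
        · simp only [Set.mem_insert_iff, Set.mem_singleton_iff] at hy hyne
          tauto
    · intro a ha
      exact hid a ha
  · apply Finset.sum_lt_sum
    · intro i hi
      by_cases hiD : i ∈ D ∪ {1, -1}
      · rw [if_pos hiD]; omega
      · rw [if_neg hiD, if_neg (fun hc => hiD (Or.inl hc))]
    · refine ⟨1, Finset.mem_Icc.2 ⟨by omega, by exact_mod_cast hn⟩, ?_⟩
      have hmem1 : (1:ℤ) ∈ D ∪ {1, -1} := Or.inr (by simp)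
      rw [if_neg h1D, if_pos hmem1]
      omega

lemma peelHX {n : ℕ} {D D' : Set ℤ} {h h' : ℤ → ℤ} (g : Good n D h)
    (hid : ∀ a ∈ D, h a = a) {x : ℤ} (hx2 : 2 ≤ x) (hxn : x ≤ (n:ℤ))
    (hxD : x ∉ D) (hx1D : x - 1 ∈ D)
    (hD' : D' = (D \ {x - 1, -(x-1)}) ∪ {x, -x})
    (hh' : ∀ a, h' a = if a = x then x - 1 else if a = -x then -(x-1) else a) :
    Good n D' h' ∧ (Real' n D' h' → Real' n D h) ∧ mu0 n D' < mu0 n D ∧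
    ¬(∀ a ∈ D', h' a = a) := by
  classical
  have hmxD : -x ∉ D := fun hc => hxD (by simpa using g.symm _ hc)
  have hmem' : ∀ a, a ∈ D' ↔ ((a ∈ D ∧ a ≠ x - 1 ∧ a ≠ -(x-1)) ∨ a = x ∨ a = -x) := by
    intro a
    rw [hD']
    simp only [Set.mem_union, Set.mem_diff, Set.mem_insert_iff, Set.mem_singleton_iff]
    tauto
  have hDpart : ∀ a ∈ D, a ≠ x ∧ a ≠ -x := by
    intro a ha
    constructor <;> rintro rfl <;> [exact hxD ha; exact hmxD ha]
  -- value characterization on D'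
  have hval : ∀ a ∈ D', (a = x ∧ h' a = x - 1) ∨ (a = -x ∧ h' a = -(x-1)) ∨
      (a ∈ D ∧ a ≠ x - 1 ∧ a ≠ -(x-1) ∧ a ≠ x ∧ a ≠ -x ∧ h' a = a) := by
    intro a ha
    rcases (hmem' a).1 ha with ⟨haD, h1, h2⟩ | he | he
    · right; right
      obtain ⟨hx1, hx2'⟩ := hDpart a haD
      exact ⟨haD, h1, h2, hx1, hx2', by rw [hh' a, if_neg hx1, if_neg hx2']⟩
    · left; exact ⟨he, by rw [hh' a, if_pos he]⟩
    · right; left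
      refine ⟨he, ?_⟩
      rw [hh' a, if_neg (by omega), if_pos he]
  have hbound : ∀ a ∈ D, a ≠ x - 1 ∧ a ≠ -(x-1) → (a ≤ x - 2 ∨ x + 1 ≤ a) ∨
      (-(x-2) ≤ a ∧ a ≤ x - 2) ∨ a ≤ -(x+1) := by
    intro a ha _
    have := hDpart a ha
    have := (g.sub ha).1
    omega
  have hstrict : ∀ a ∈ D', ∀ b ∈ D', a < b → h' a < h' b := by
    intro a ha b hb hab
    rcases hval a ha with ⟨rfl, e1⟩ | ⟨rfl, e1⟩ | ⟨haD, u1, u2, u3, u4, e1⟩ <;>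
      rcases hval b hb with ⟨rfl, e2⟩ | ⟨rfl, e2⟩ | ⟨hbD, v1, v2, v3, v4, e2⟩ <;>
      omega
  have hsymm' : ∀ a ∈ D', -a ∈ D' := by
    intro a ha
    rcases (hmem' a).1 ha with ⟨haD, h1, h2⟩ | he | he
    · exact (hmem' (-a)).2 (Or.inl ⟨g.symm a haD, by omega, by omega⟩)
    · exact (hmem' (-a)).2 (Or.inr (Or.inr (by omega)))
    · exact (hmem' (-a)).2 (Or.inr (Or.inl (by omega)))
  have hgood : Good n D' h' := by
    refine ⟨⟨x, (hmem' x).2 (Or.inr (Or.inl rfl))⟩, ?_, hsymm', ?_, ?_, ?_, ?_⟩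
    · intro a ha
      rcases (hmem' a).1 ha with ⟨haD, -⟩ | he | he
      · exact g.sub haD
      · rw [mem_Zodd]; omega
      · rw [mem_Zodd]; omega
    · intro a ha b hb hab
      rcases eq_or_lt_of_le hab with rfl | hlt
      · omega
      · exact le_of_lt (hstrict a ha b hb hlt)
    · intro a ha
      rcases hval a ha with ⟨he, e1⟩ | ⟨he, e1⟩ | ⟨haD, u1, u2, u3, u4, e1⟩ <;>
        rcases hval (-a) (hsymm' a ha) with ⟨f1, f2⟩ | ⟨f1, f2⟩ | ⟨hbD, v1, v2, v3, v4, f5⟩ <;>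
        omega
    · intro a ha b hb hab he
      exact absurd he (ne_of_lt (hstrict a ha b hb hab))
    · intro a ha
      rw [mem_Zodd]
      rcases hval a ha with ⟨he, e1⟩ | ⟨he, e1⟩ | ⟨haD, -, -, -, -, e1⟩
      · omega
      · omega
      · have := g.sub haD; rw [mem_Zodd] at this; omega
  have hnotid : ¬(∀ a ∈ D', h' a = a) := by
    intro hc
    have hxmem : x ∈ D' := (hmem' x).2 (Or.inr (Or.inl rfl))
    have := hc x hxmem
    rw [hh' x, if_pos rfl] at this
    omega
  refine ⟨hgood, ?_, ?_, hnotid⟩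
  · intro hreal
    have hgen := gen_f n x.toNat (by omega)
    rw [fO_eq_res n hx2] at hgen
    refine realR hgen hreal ?_ ?_
    · intro y
      constructor
      · intro hy
        obtain ⟨hy1, hy2⟩ := hDpart y hy
        refine ⟨⟨g.sub hy, ?_⟩, ?_⟩
        · simp only [Set.mem_insert_iff, Set.mem_singleton_iff]; omega
        · by_cases hc1 : y = x - 1
          · subst hc1
            rw [if_pos rfl]
            exact (hmem' x).2 (Or.inr (Or.inl rfl))
          · by_cases hc2 : y = -(x-1)
            · subst hc2
              rw [if_neg (by omega), if_pos rfl]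
              exact (hmem' (-x)).2 (Or.inr (Or.inr rfl))
            · rw [if_neg hc1, if_neg hc2]
              exact (hmem' y).2 (Or.inl ⟨hy, hc1, hc2⟩)
      · rintro ⟨⟨hyz, hyne⟩, hy⟩
        simp only [Set.mem_insert_iff, Set.mem_singleton_iff] at hyne
        by_cases hc1 : y = x - 1
        · subst hc1; exact hx1D
        · by_cases hc2 : y = -(x-1)
          · subst hc2; exact g.symm _ hx1D
          · rw [if_neg hc1, if_neg hc2] at hy
            rcases (hmem' y).1 hy with ⟨hyD, -⟩ | rfl | rfl
            · exact hyD
            · omega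
            · omega
    · intro a ha
      rw [hid a ha]
      obtain ⟨hy1, hy2⟩ := hDpart a ha
      by_cases hc1 : a = x - 1
      · subst hc1
        rw [if_pos rfl, hh' x, if_pos rfl]
      · by_cases hc2 : a = -(x-1)
        · subst hc2
          rw [if_neg (by omega), if_pos rfl, hh' (-x), if_neg (by omega), if_pos rfl]
        · rw [if_neg hc1, if_neg hc2, hh' a, if_neg hy1, if_neg hy2]
  · -- mu0 decreases
    have hmemD' : ∀ y : ℤ, 0 ≤ y → y ≠ x → y ≠ x - 1 → (y ∈ D' ↔ y ∈ D) := by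
      intro y hy0 hyx hyx1
      rw [hmem' y]
      constructor
      · rintro (⟨hyD, -⟩ | rfl | rfl)
        · exact hyD
        · omega
        · omega
      · intro hyD
        exact Or.inl ⟨hyD, hyx1, by omega⟩
    have hxI : x ∈ Finset.Icc (0:ℤ) n := Finset.mem_Icc.2 ⟨by omega, hxn⟩
    have hx1I : x - 1 ∈ (Finset.Icc (0:ℤ) n).erase x := by
      rw [Finset.mem_erase]
      exact ⟨by omega, Finset.mem_Icc.2 ⟨by omega, by omega⟩⟩
    unfold mu0
    rw [← Finset.add_sum_erase _ _ hxI, ← Finset.add_sum_erase _ _ hx1I,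
      ← Finset.add_sum_erase _ (fun y => if y ∈ D then 0 else (y+1).toNat) hxI,
      ← Finset.add_sum_erase _ (fun y => if y ∈ D then 0 else (y+1).toNat) hx1I]
    have hrest : ∑ y ∈ ((Finset.Icc (0:ℤ) n).erase x).erase (x-1),
        (if y ∈ D' then 0 else (y+1).toNat) =
        ∑ y ∈ ((Finset.Icc (0:ℤ) n).erase x).erase (x-1),
        (if y ∈ D then 0 else (y+1).toNat) := by
      apply Finset.sum_congr rfl
      intro y hy
      rw [Finset.mem_erase, Finset.mem_erase, Finset.mem_Icc] at hy
      rw [hmemD' y (by omega) hy.2.1 hy.1]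
    rw [hrest]
    have e1 : x ∉ D := hxD
    have e2 : x ∈ D' := (hmem' x).2 (Or.inr (Or.inl rfl))
    have e3 : x - 1 ∈ D := hx1D
    have e4 : x - 1 ∉ D' := by
      rw [hmem' (x-1)]
      rintro (⟨-, hc, -⟩ | hc | hc) <;> omega
    rw [if_pos e2, if_neg e4, if_neg e1, if_pos e3]
    omega

lemma main {n : ℕ} (hn : 1 ≤ n) :
    ∀ N D h, mu n D h = N → Good n D h →
      ¬(D = Zodd n ∧ ∀ a ∈ D, h a = a) → Real' n D h := by
  intro N
  induction N using Nat.strong_induction_on with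
  | _ N ih =>
    intro D h hmu g hid
    subst hmu
    by_cases hid1 : ∀ a ∈ D, h a = a
    · -- h is the identity on D, and D ≠ Zodd n
      have hDne : D ≠ Zodd n := fun hD => hid ⟨hD, hid1⟩
      by_cases hp : ∃ x : ℤ, 1 ≤ x ∧ x ≤ (n:ℤ) ∧ x ∉ D
      · obtain ⟨x, ⟨hx1, hxn, hxD⟩, hmin⟩ :=
          Int.exists_least_of_bdd (P := fun x => 1 ≤ x ∧ x ≤ (n:ℤ) ∧ x ∉ D)
            ⟨1, fun z hz => hz.1⟩ hp
        rcases eq_or_lt_of_le hx1 with rfl | hx2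
        · -- minimal hole is 1
          have hm1D : (-1:ℤ) ∉ D := fun hc => hxD (by simpa using g.symm _ hc)
          by_cases hful : D ∪ {1, -1} = Zodd n
          · -- D = Zodd n \ {1, -1} : base case f_1
            have hDeq : Zodd n \ {1, -1} = D := by
              ext y
              constructor
              · rintro ⟨hyz, hyne⟩
                rw [← hful] at hyz
                rcases hyz with hy | hy
                · exact hy
                · exact absurd hy hyne
              · intro hy
                refine ⟨g.sub hy, ?_⟩
                simp only [Set.mem_insert_iff, Set.mem_singleton_iff]
                rintro (rfl | rfl)
                · exact hxD hy
                · exact hm1D hy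
            have hgen := gen_f n 1 hn
            rw [fO_one n] at hgen
            exact realBase hgen hDeq hid1
          · obtain ⟨hgood', hR, hm0⟩ := peelH1 g hn hid1 hxD
            apply hR
            refine ih _ (mu_lt0 hgood' hm0) _ _ rfl hgood' ?_
            rintro ⟨hDeq, -⟩
            exact hful hDeq
        · -- minimal hole is x ≥ 2
          have hx1D : x - 1 ∈ D := by
            by_contra hc
            have := hmin (x-1) ⟨by omega, by omega, hc⟩
            omega
          obtain ⟨hgood', hR, hm0, hnotid'⟩ :=
            peelHX (D' := (D \ {x - 1, -(x-1)}) ∪ {x, -x})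
              (h' := fun a => if a = x then x - 1 else if a = -x then -(x-1) else a)
              g hid1 (by omega) hxn hxD hx1D rfl (fun a => rfl)
          apply hR
          exact ih _ (mu_lt0 hgood' hm0) _ _ rfl hgood' (fun hc => hnotid' hc.2)
      · -- no positive hole : D = Zodd n \ {0} : base case f_0
        push_neg at hp
        have h0D : (0:ℤ) ∉ D := by
          intro h0
          apply hDne
          ext y
          constructor
          · exact fun hy => g.sub hy
          · intro hy
            rw [mem_Zodd] at hy
            rcases lt_trichotomy y 0 with hy0 | rfl | hy0
            · have := g.symm (-y) (hp (-y) (by omega) (by omega))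
              simpa using this
            · exact h0
            · exact hp y (by omega) (by omega)
        have hDeq : Zodd n \ {0} = D := by
          ext y
          constructor
          · rintro ⟨hyz, hyne⟩
            rw [Set.mem_singleton_iff] at hyne
            rw [mem_Zodd] at hyz
            rcases lt_trichotomy y 0 with hy0 | rfl | hy0
            · have := g.symm (-y) (hp (-y) (by omega) (by omega))
              simpa using this
            · exact absurd rfl hyne
            · exact hp y (by omega) (by omega)
          · intro hy
            refine ⟨g.sub hy, ?_⟩
            simp only [Set.mem_singleton_iff]
            rintro rfl
            exact h0D hy
        have hgen := gen_f n 0 (by omega)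
        rw [fO_zero n] at hgen
        exact realBase hgen hDeq hid1
    · -- h is not the identity on D
      push_neg at hid1
      obtain ⟨aw, hawD, hawne⟩ := hid1
      have hzero : 0 ∈ D → h 0 = 0 := by
        intro h0
        have := g.odd 0 h0; simp at this; omega
      by_cases hcomp : ∃ a ∈ D, 0 < a ∧ h a < a
      · obtain ⟨a1, ha1D, ha1p, ha1lt⟩ := hcomp
        by_cases hmax : ∀ a ∈ D, 0 < a → h a ≤ (n:ℤ) - 1
        · -- peel g from the left
          have hex : ∃ a0 : ℤ, (a0 = 0 ∧ ∀ a ∈ D, 0 < a → h a ≠ 0) ∨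
              (a0 ∈ D ∧ 0 < a0 ∧ h a0 = 0 ∧ ∀ a ∈ D, 0 < a → h a = 0 → a ≤ a0) := by
            by_cases hcz : ∃ a, a ∈ D ∧ 0 < a ∧ h a = 0
            · obtain ⟨a0, ⟨ha0D, ha0p, ha0z⟩, hgr⟩ :=
                Int.exists_greatest_of_bdd (P := fun a => a ∈ D ∧ 0 < a ∧ h a = 0)
                  ⟨(n:ℤ), fun z hz => (g.sub hz.1).2⟩ hcz
              exact ⟨a0, Or.inr ⟨ha0D, ha0p, ha0z,
                fun a ha hap haz => hgr a ⟨ha, hap, haz⟩⟩⟩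
            · push_neg at hcz
              exact ⟨0, Or.inl ⟨rfl, hcz⟩⟩
          obtain ⟨a0, ha0spec⟩ := hex
          obtain ⟨hgood', hR, hsM, himp⟩ :=
            peelG (h' := fun a => if 0 < a0 ∧ a = a0 then 1 else
                if 0 < a0 ∧ a = -a0 then -1 else
                (if 0 < h a then h a + 1 else if h a < 0 then h a - 1 else 0))
              g ha1D ha1p ha1lt hmax ha0spec (fun a => rfl)
          by_cases hful : D = Zodd n ∧ ∀ a ∈ D,
              h a = if 0 < a then a - 1 else if a < 0 then a + 1 else 0
          · exact realBase (gen_g n) hful.1.symm hful.2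
          · apply hR
            refine ih _ (mu_lt1 hgood' hsM) _ _ rfl hgood' ?_
            rintro ⟨hDeq, hid'⟩
            exact hful ⟨hDeq, himp hid'⟩
        · -- blocked : some value equals n
          push_neg at hmax
          obtain ⟨b0, hb0D, hb0p, hb0gt⟩ := hmax
          have hb0n : h b0 = n := by
            have := (g.ran b0 hb0D).2; omega
          obtain ⟨b, hbD, hbp, hb2, hble, hgap⟩ := gaptop g ha1D ha1p ha1lt hb0D hb0n
          obtain ⟨hgood', hR, hmu1, hsMf, hnotid'⟩ :=
            peelF (h' := fun a => if a = b then h b - 1 else if a = -b then 1 - h b else h a)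
              g hbD hbp hb2 hgap (fun a => rfl)
          apply hR
          refine ih _ ?_ _ _ rfl hgood' hnotid'
          refine mu_lt2 hgood' (hsMf ?_) hmu1
          have := sM_ge (h := h) ha1D (by omega) ((g.sub ha1D).2)
          omega
      · -- expansion case
        push_neg at hcomp
        obtain ⟨ap, hapD, happ, haplt⟩ : ∃ a ∈ D, 0 < a ∧ a < h a := by
          rcases lt_trichotomy aw 0 with hw | hw | hw
          · have h1 := g.odd aw hawD
            have h2 := hcomp (-aw) (g.symm aw hawD) (by omega)
            exact ⟨-aw, g.symm aw hawD, by omega, by omega⟩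
          · subst hw; exact absurd (hzero hawD) hawne
          · have h2 := hcomp aw hawD hw
            exact ⟨aw, hawD, hw, by omega⟩
        obtain ⟨b, hbD, hbp, hb2, hblt, hgap⟩ := gapexp g hcomp hapD happ haplt
        obtain ⟨hgood', hR, hmu1, hsMf, hnotid'⟩ :=
          peelF (h' := fun a => if a = b then h b - 1 else if a = -b then 1 - h b else h a)
            g hbD hbp hb2 hgap (fun a => rfl)
        apply hR
        refine ih _ ?_ _ _ rfl hgood' hnotid'
        exact mu_lt2 hgood' (hsMf (by omega)) hmu1


theorem stmt8 (n : ℕ) (hn : 1 ≤ n) (D : Set ℤ) (h : ℤ → ℤ)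
    (hpe : PartialEnd (Zodd n) D h)
    (hid : ¬(D = Zodd n ∧ ∀ a ∈ D, h a = a)) :
    ∃ φ : ℤ →. ℤ, FinComp (GenOdd n) φ ∧ φ.Dom = D ∧ ∀ a ∈ D, h a ∈ φ a := by
  exact main hn (mu n D h) D h rfl (good_of_pe hpe) hid
end

section
/- Let n ≥ 1 and let a ≠ b be elements of Z_{2n+1}. Then there exists a natural number k such that δ⁺(g^k(a)) ≠ δ⁺(g^k(b)) or δ⁻(g^k(a)) ≠ δ⁻(g^k(b)), where g^k denotes the k-fold iterate of g. -/
/-- The endomorphism `g` of `Z_{2n+1}`, as a total function on `ℤ`. -/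
def gOFun (a : ℤ) : ℤ := if 0 < a then a - 1 else if a < 0 then a + 1 else 0

/-- The map `δ⁺`. -/
def delp (a : ℤ) : ℤ := if 1 ≤ a then 1 else 0

/-- The map `δ⁻`. -/
def delm (a : ℤ) : ℤ := if 0 ≤ a then 1 else 0

lemma iter_nonneg (k : ℕ) : ∀ a : ℤ, 0 ≤ a → gOFun^[k] a = max (a - k) 0 := by
  induction k with
  | zero => intro a ha; simp; omega
  | succ k ih =>
    intro a ha
    rw [Function.iterate_succ_apply]
    have hg : gOFun a = max (a - 1) 0 := by
      unfold gOFun; split_ifs <;> omega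
    rw [hg, ih _ (le_max_right _ _)]
    push_cast
    omega

lemma iter_nonpos (k : ℕ) : ∀ a : ℤ, a ≤ 0 → gOFun^[k] a = min (a + k) 0 := by
  induction k with
  | zero => intro a ha; simp; omega
  | succ k ih =>
    intro a ha
    rw [Function.iterate_succ_apply]
    have hg : gOFun a = min (a + 1) 0 := by
      unfold gOFun; split_ifs <;> omega
    rw [hg, ih _ (min_le_right _ _)]
    push_cast
    omega

lemma sep_nonneg (a b : ℤ) (ha : 0 ≤ a) (hb : 0 ≤ b) (h : a < b) :
    ∃ k : ℕ, delp (gOFun^[k] a) ≠ delp (gOFun^[k] b) := by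
  refine ⟨(b - 1).toNat, ?_⟩
  have hk : ((b - 1).toNat : ℤ) = b - 1 := Int.toNat_of_nonneg (by omega)
  rw [iter_nonneg _ a ha, iter_nonneg _ b hb, hk]
  have h1 : max (a - (b - 1)) 0 = 0 := max_eq_right (by omega)
  have h2 : max (b - (b - 1)) 0 = 1 := by omega
  rw [h1, h2]
  simp [delp]

lemma sep_nonpos (a b : ℤ) (ha : a ≤ 0) (hb : b ≤ 0) (h : b < a) :
    ∃ k : ℕ, delm (gOFun^[k] a) ≠ delm (gOFun^[k] b) := by
  refine ⟨(-b - 1).toNat, ?_⟩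
  have hk : ((-b - 1).toNat : ℤ) = -b - 1 := Int.toNat_of_nonneg (by omega)
  rw [iter_nonpos _ a ha, iter_nonpos _ b hb, hk]
  have h1 : min (a + (-b - 1)) 0 = 0 := min_eq_right (by omega)
  have h2 : min (b + (-b - 1)) 0 = -1 := by omega
  rw [h1, h2]
  simp [delm]

theorem stmt9 (n : ℕ) (hn : 1 ≤ n) (a b : ℤ) (ha : a ∈ Zodd n) (hb : b ∈ Zodd n)
    (hab : a ≠ b) :
    ∃ k : ℕ,
      delp (gOFun^[k] a) ≠ delp (gOFun^[k] b) ∨ delm (gOFun^[k] a) ≠ delm (gOFun^[k] b) := by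
  rcases le_or_gt 0 a with ha0 | ha0 <;> rcases le_or_gt 0 b with hb0 | hb0
  · rcases lt_or_gt_of_ne hab with h | h
    · obtain ⟨k, hk⟩ := sep_nonneg a b ha0 hb0 h
      exact ⟨k, Or.inl hk⟩
    · obtain ⟨k, hk⟩ := sep_nonneg b a hb0 ha0 h
      exact ⟨k, Or.inl hk.symm⟩
  · exact ⟨0, Or.inr (by simp [delm]; omega)⟩
  · exact ⟨0, Or.inr (by simp [delm]; omega)⟩
  · rcases lt_or_gt_of_ne hab with h | h
    · obtain ⟨k, hk⟩ := sep_nonpos b a hb0.le ha0.le h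
      exact ⟨k, Or.inr hk.symm⟩
    · obtain ⟨k, hk⟩ := sep_nonpos a b ha0.le hb0.le h
      exact ⟨k, Or.inr hk⟩
end

section
/- Let n ≥ 1 and let S be a subalgebra of Z_{2n+1}², i.e. a nonempty subset of Z_{2n+1} × Z_{2n+1} closed under the coordinatewise operations ∧, ∨, ¬, →. (i) If δ⁻(a) ≤ δ⁻(b) for all (a,b) ∈ S, then S is the graph of a partial endomorphism of Z_{2n+1}, i.e. there is a partial endomorphism e with S = {(a, e(a)) : a ∈ dom e}. (ii) If δ⁺(a) ≤ δ⁺(b) for all (a,b) ∈ S, then the converse relation Sˇ = {(b,a) : (a,b) ∈ S} is the graph of a partial endomorphism of Z_{2n+1}. (iii) If δ⁻(a) ≤ δ⁺(b) for all (a,b) ∈ S, then S is the graph of a partial endomorphism e of Z_{2n+1} with 0 ∉ dom e and 0 ∉ image(e). (iv) If δ⁺(a) ≤ δ⁻(b) for all (a,b) ∈ S, then S or Sˇ is the graph of a partial endomorphism of Z_{2n+1}. -/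
/-- `S` is a subalgebra of `Z²` (coordinatewise operations). -/
def Subalg2 (Z : Set ℤ) (S : Set (ℤ × ℤ)) : Prop :=
  S.Nonempty ∧ S ⊆ Z ×ˢ Z ∧
    ∀ p ∈ S, ∀ q ∈ S,
      (min p.1 q.1, min p.2 q.2) ∈ S ∧ (max p.1 q.1, max p.2 q.2) ∈ S ∧
      (-p.1, -p.2) ∈ S ∧ (SImp p.1 q.1, SImp p.2 q.2) ∈ S

lemma SImp_self (a : ℤ) : SImp a a = max (-a) a := by simp [SImp]
lemma SImp_of_le {a b : ℤ} (h : a ≤ b) : SImp a b = max (-a) b := by simp [SImp, h]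
lemma SImp_of_gt {a b : ℤ} (h : b < a) : SImp a b = min (-a) b := by
  simp [SImp, not_le.mpr h]

lemma neg_mem2 {Z : Set ℤ} {S : Set (ℤ × ℤ)} (hS : Subalg2 Z S) {p : ℤ × ℤ}
    (hp : p ∈ S) : (-p.1, -p.2) ∈ S := (hS.2.2 p hp p hp).2.2.1

lemma simp_mem2 {Z : Set ℤ} {S : Set (ℤ × ℤ)} (hS : Subalg2 Z S) {p q : ℤ × ℤ}
    (hp : p ∈ S) (hq : q ∈ S) : (SImp p.1 q.1, SImp p.2 q.2) ∈ S :=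
  (hS.2.2 p hp q hq).2.2.2

lemma mem_swap {S : Set (ℤ × ℤ)} {x y : ℤ} :
    (x, y) ∈ Prod.swap '' S ↔ (y, x) ∈ S := by
  constructor
  · rintro ⟨⟨u, v⟩, hu, h⟩
    simp only [Prod.swap_prod_mk, Prod.mk.injEq] at h
    rcases h with ⟨h1, h2⟩; subst h1; subst h2; exact hu
  · intro h; exact ⟨(y, x), h, rfl⟩

lemma swap_subalg2 {Z : Set ℤ} {S : Set (ℤ × ℤ)} (hS : Subalg2 Z S) :
    Subalg2 Z (Prod.swap '' S) := by
  obtain ⟨⟨p, hp⟩, hsub, hcl⟩ := hS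
  refine ⟨⟨p.swap, p, hp, rfl⟩, ?_, ?_⟩
  · rintro ⟨x, y⟩ h
    have := hsub (mem_swap.mp h)
    exact ⟨(Set.mem_prod.mp this).2, (Set.mem_prod.mp this).1⟩
  · rintro ⟨x, y⟩ h ⟨u, v⟩ h'
    have hx : (y, x) ∈ S := mem_swap.mp h
    have hu : (v, u) ∈ S := mem_swap.mp h'
    have c := hcl (y, x) hx (v, u) hu
    exact ⟨mem_swap.mpr c.1, mem_swap.mpr c.2.1, mem_swap.mpr c.2.2.1,
      mem_swap.mpr c.2.2.2⟩

/-- The key splitting lemma: two pairs with the same first coordinate yield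
`(max (-a) a, ±t)` with `t ≥ 1`. -/
lemma split_lemma {Z : Set ℤ} {S : Set (ℤ × ℤ)} (hS : Subalg2 Z S) {a b c : ℤ}
    (hb : (a, b) ∈ S) (hc : (a, c) ∈ S) (hne : b ≠ c) :
    ∃ t : ℤ, 1 ≤ t ∧ (max (-a) a, t) ∈ S ∧ (max (-a) a, -t) ∈ S := by
  wlog hlt : b < c generalizing b c
  · exact this hc hb (Ne.symm hne) (by omega)
  have h1 := simp_mem2 hS hb hc
  have h2 := simp_mem2 hS hc hb
  simp only [SImp_self] at h1 h2
  rw [SImp_of_le hlt.le] at h1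
  rw [SImp_of_gt hlt] at h2
  have he : min (-c) b = -(max (-b) c) := by omega
  rw [he] at h2
  exact ⟨max (-b) c, by omega, h1, h2⟩

lemma fst_subalg {n : ℕ} {S : Set (ℤ × ℤ)} (hS : Subalg2 (Zodd n) S) :
    Subalg (Zodd n) (Prod.fst '' S) := by
  obtain ⟨⟨p, hp⟩, hsub, hcl⟩ := hS
  refine ⟨⟨p.1, p, hp, rfl⟩, ?_, ?_⟩
  · rintro _ ⟨q, hq, rfl⟩; exact (Set.mem_prod.mp (hsub hq)).1
  · rintro a ⟨q, hq, rfl⟩ b ⟨r, hr, rfl⟩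
    have c := hcl q hq r hr
    exact ⟨⟨_, c.1, rfl⟩, ⟨_, c.2.1, rfl⟩, ⟨_, c.2.2.1, rfl⟩, ⟨_, c.2.2.2, rfl⟩⟩

lemma delm_one {a : ℤ} (h : 0 ≤ a) : delm a = 1 := if_pos h
lemma delm_zero {a : ℤ} (h : a < 0) : delm a = 0 := if_neg (by omega)
lemma delp_one {a : ℤ} (h : 1 ≤ a) : delp a = 1 := if_pos h
lemma delp_zero {a : ℤ} (h : a < 1) : delp a = 0 := if_neg (by omega)

/-- Graph construction: a functional subalgebra of `Z²` is the graph of a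
partial endomorphism. -/
lemma graph_lemma {n : ℕ} {S : Set (ℤ × ℤ)} (hS : Subalg2 (Zodd n) S)
    (hfun : ∀ a b c : ℤ, (a, b) ∈ S → (a, c) ∈ S → b = c) :
    ∃ D : Set ℤ, ∃ h : ℤ → ℤ, PartialEnd (Zodd n) D h ∧
      S = {p : ℤ × ℤ | p.1 ∈ D ∧ p.2 = h p.1} := by
  classical
  set D : Set ℤ := Prod.fst '' S with hD
  set h : ℤ → ℤ := fun a => if hx : ∃ b, (a, b) ∈ S then hx.choose else 0 with hh
  have hmem : ∀ a b : ℤ, (a, b) ∈ S → h a = b := by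
    intro a b hab
    have hx : ∃ y, (a, y) ∈ S := ⟨b, hab⟩
    simp only [hh, dif_pos hx]
    exact hfun a _ b hx.choose_spec hab
  have hgr : ∀ a ∈ D, (a, h a) ∈ S := by
    rintro _ ⟨⟨x, y⟩, hxy, rfl⟩
    rw [hmem x y hxy]; exact hxy
  have himg : h '' D = Prod.snd '' S := by
    ext z; constructor
    · rintro ⟨a, ha, rfl⟩; exact ⟨(a, h a), hgr a ha, rfl⟩
    · rintro ⟨⟨x, y⟩, hxy, rfl⟩; exact ⟨x, ⟨(x, y), hxy, rfl⟩, hmem x y hxy⟩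
  have hgraph : S = {p : ℤ × ℤ | p.1 ∈ D ∧ p.2 = h p.1} := by
    ext ⟨a, b⟩
    simp only [Set.mem_setOf_eq]
    constructor
    · intro hab; exact ⟨⟨(a, b), hab, rfl⟩, (hmem a b hab).symm⟩
    · rintro ⟨haD, rfl⟩; exact hgr a haD
  refine ⟨D, h, ⟨fst_subalg hS, ?_, ?_, ?_⟩, hgraph⟩
  · -- Subalg (Zodd n) (h '' D)
    rw [himg]
    have : Prod.snd '' S = Prod.fst '' (Prod.swap '' S) := by
      rw [Set.image_image]; rfl
    rw [this]; exact fst_subalg (swap_subalg2 hS)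
  · exact fun a ha => ⟨a, ha, rfl⟩
  · intro a ha b hb
    have c := hS.2.2 (a, h a) (hgr a ha) (b, h b) (hgr b hb)
    exact ⟨hmem _ _ c.1, hmem _ _ c.2.1, hmem _ _ c.2.2.1, hmem _ _ c.2.2.2⟩

theorem stmt10 (n : ℕ) (hn : 1 ≤ n) (S : Set (ℤ × ℤ)) (hS : Subalg2 (Zodd n) S) :
    ((∀ p ∈ S, delm p.1 ≤ delm p.2) →
      ∃ D : Set ℤ, ∃ h : ℤ → ℤ, PartialEnd (Zodd n) D h ∧
        S = {p : ℤ × ℤ | p.1 ∈ D ∧ p.2 = h p.1}) ∧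
    ((∀ p ∈ S, delp p.1 ≤ delp p.2) →
      ∃ D : Set ℤ, ∃ h : ℤ → ℤ, PartialEnd (Zodd n) D h ∧
        Prod.swap '' S = {p : ℤ × ℤ | p.1 ∈ D ∧ p.2 = h p.1}) ∧
    ((∀ p ∈ S, delm p.1 ≤ delp p.2) →
      ∃ D : Set ℤ, ∃ h : ℤ → ℤ, PartialEnd (Zodd n) D h ∧
        (0 : ℤ) ∉ D ∧ (0 : ℤ) ∉ h '' D ∧
        S = {p : ℤ × ℤ | p.1 ∈ D ∧ p.2 = h p.1}) ∧
    ((∀ p ∈ S, delp p.1 ≤ delm p.2) →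
      ∃ D : Set ℤ, ∃ h : ℤ → ℤ, PartialEnd (Zodd n) D h ∧
        (S = {p : ℤ × ℤ | p.1 ∈ D ∧ p.2 = h p.1} ∨
          Prod.swap '' S = {p : ℤ × ℤ | p.1 ∈ D ∧ p.2 = h p.1})) := by
  refine ⟨?_, ?_, ?_, ?_⟩
  · -- (i)
    intro hd
    apply graph_lemma hS
    intro a b c hb hc
    by_contra hne
    obtain ⟨t, ht, h1, h2⟩ := split_lemma hS hb hc hne
    have key : delm (max (-a) a) ≤ delm (-t) := hd _ h2
    rw [delm_one (show (0:ℤ) ≤ max (-a) a by omega),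
      delm_zero (show -t < 0 by omega)] at key
    omega
  · -- (ii)
    intro hd
    apply graph_lemma (swap_subalg2 hS)
    intro b a a' ha ha'
    by_contra hne
    obtain ⟨t, ht, h1, h2⟩ := split_lemma (swap_subalg2 hS) ha ha' hne
    have h3 : (-t, max (-b) b) ∈ S := mem_swap.mp h2
    have h4 := neg_mem2 hS h3
    rw [neg_neg] at h4
    have key : delp t ≤ delp (-(max (-b) b)) := hd _ h4
    rw [delp_one ht, delp_zero (show -(max (-b) b) < 1 by omega)] at key
    omega
  · -- (iii)
    intro hd
    have hfun : ∀ a b c : ℤ, (a, b) ∈ S → (a, c) ∈ S → b = c := by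
      intro a b c hb hc
      by_contra hne
      obtain ⟨t, ht, h1, h2⟩ := split_lemma hS hb hc hne
      have key : delm (max (-a) a) ≤ delp (-t) := hd _ h2
      rw [delm_one (show (0:ℤ) ≤ max (-a) a by omega),
        delp_zero (show -t < 1 by omega)] at key
      omega
    have no0l : ∀ b : ℤ, (0, b) ∉ S := by
      intro b hb
      have h2 := neg_mem2 hS hb
      rw [show -(0:ℤ) = 0 by ring] at h2
      have k1 : delm 0 ≤ delp b := hd _ hb
      have k2 : delm 0 ≤ delp (-b) := hd _ h2
      rw [delm_one le_rfl] at k1 k2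
      rcases lt_or_ge b 1 with h | h
      · rw [delp_zero h] at k1; omega
      · rw [delp_zero (show -b < 1 by omega)] at k2; omega
    have no0r : ∀ a : ℤ, (a, 0) ∉ S := by
      intro a ha
      have h2 := neg_mem2 hS ha
      rw [show -(0:ℤ) = 0 by ring] at h2
      have k1 : delm a ≤ delp 0 := hd _ ha
      have k2 : delm (-a) ≤ delp 0 := hd _ h2
      rw [delp_zero (by omega)] at k1 k2
      rcases le_or_gt 0 a with h | h
      · rw [delm_one h] at k1; omega
      · rw [delm_one (show (0:ℤ) ≤ -a by omega)] at k2; omega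
    obtain ⟨D, h, hpe, hgr⟩ := graph_lemma hS hfun
    refine ⟨D, h, hpe, ?_, ?_, hgr⟩
    · intro h0
      have : ((0:ℤ), h 0) ∈ S := by rw [hgr]; exact ⟨h0, rfl⟩
      exact no0l _ this
    · rintro ⟨a, ha, hea⟩
      have : (a, (0:ℤ)) ∈ S := by rw [hgr]; exact ⟨ha, hea.symm⟩
      exact no0r _ this
  · -- (iv)
    intro hd
    by_cases hf : ∀ a b c : ℤ, (a, b) ∈ S → (a, c) ∈ S → b = c
    · obtain ⟨D, h, hpe, hgr⟩ := graph_lemma hS hf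
      exact ⟨D, h, hpe, Or.inl hgr⟩
    · push_neg at hf
      obtain ⟨a, b, c, hb, hc, hne⟩ := hf
      obtain ⟨t, ht, h1, h2⟩ := split_lemma hS hb hc hne
      have key : delp (max (-a) a) ≤ delm (-t) := hd _ h2
      rw [delm_zero (show -t < 0 by omega)] at key
      have ha0 : max (-a) a = 0 := by
        by_contra hx
        rw [delp_one (by omega)] at key; omega
      rw [ha0] at h1 h2
      have hfun2 : ∀ b' a1 a2 : ℤ, (b', a1) ∈ Prod.swap '' S →
          (b', a2) ∈ Prod.swap '' S → a1 = a2 := by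
        intro b' a1 a2 hA1 hA2
        by_contra hne2
        obtain ⟨t', ht', g1, g2⟩ := split_lemma (swap_subalg2 hS) hA1 hA2 hne2
        have g2' : (-t', max (-b') b') ∈ S := mem_swap.mp g2
        have g3 := neg_mem2 hS g2'
        rw [neg_neg] at g3
        have k : delp t' ≤ delm (-(max (-b') b')) := hd _ g3
        rw [delp_one ht'] at k
        have hb0 : max (-b') b' = 0 := by
          rcases lt_or_ge (-(max (-b') b')) 0 with hlt | hle
          · rw [delm_zero hlt] at k; omega
          · omega
        rw [hb0] at g2'
        have comb := simp_mem2 hS g2' h2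
        rw [show SImp (-t') 0 = max (-(-t')) 0 from SImp_of_le (by omega),
          show SImp (0:ℤ) (-t) = min (-(0:ℤ)) (-t) from SImp_of_gt (by omega)] at comb
        rw [show max (-(-t')) 0 = t' by omega,
          show min (-(0:ℤ)) (-t) = -t by omega] at comb
        have k2 : delp t' ≤ delm (-t) := hd _ comb
        rw [delp_one ht', delm_zero (show -t < 0 by omega)] at k2
        omega
      obtain ⟨D, h, hpe, hgr⟩ := graph_lemma (swap_subalg2 hS) hfun2
      exact ⟨D, h, hpe, Or.inr hgr⟩
end

section
/- Let n ≥ 2, let S be a subalgebra of Z_{2n}² (a nonempty subset of Z_{2n} × Z_{2n} closed under the coordinatewise operations ∧, ∨, ¬, →), and let i, j ∈ {1,…,n−1}. Then: (i) S ⊆ (β_i⁺, β_j⁺)⁻¹(≤) if and only if Sˇ ⊆ (β_j⁻, β_i⁻)⁻¹(≤), where Sˇ = {(b,a) : (a,b) ∈ S}; (ii) S ⊆ (β_i⁺, β)⁻¹(≤) if and only if Sˇ ⊆ (β, β_i⁻)⁻¹(≤), and S ⊆ (β_i⁻, β)⁻¹(≤) if and only if Sˇ ⊆ (β, β_i⁺)⁻¹(≤);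 (iii) S ⊆ (β_i⁺, β_j⁻)⁻¹(≤) if and only if S ⊆ (β_i⁺, β_j⁺)⁻¹(≤) or S ⊆ (β_i⁻, β_j⁻)⁻¹(≤). -/
/-- The map `β_i⁻`. -/
def betaM (i : ℕ) (a : ℤ) : ℤ := if -(i : ℤ) ≤ a then 1 else 0

/-- The map `β_i⁺`. -/
def betaP (i : ℕ) (a : ℤ) : ℤ := if (i : ℤ) < a then 1 else 0

/-- The map `β`. -/
def betaF (a : ℤ) : ℤ := if 0 < a then 1 else 0

lemma indic_le {P Q : Prop} [Decidable P] [Decidable Q] :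
    ((if P then (1:ℤ) else 0) ≤ if Q then (1:ℤ) else 0) ↔ (P → Q) := by
  split_ifs with h1 h2 <;> simp_all

lemma simp_self (a : ℤ) : SImp a a = |a| := by
  simp [SImp, abs_eq_max_neg, max_comm]

theorem stmt11 (n : ℕ) (hn : 2 ≤ n) (S : Set (ℤ × ℤ)) (hS : Subalg2 (Zeven n) S)
    (i j : ℕ) (hi1 : 1 ≤ i) (hi2 : i ≤ n - 1) (hj1 : 1 ≤ j) (hj2 : j ≤ n - 1) :
    ((∀ p ∈ S, betaP i p.1 ≤ betaP j p.2) ↔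
      (∀ p ∈ Prod.swap '' S, betaM j p.1 ≤ betaM i p.2)) ∧
    ((∀ p ∈ S, betaP i p.1 ≤ betaF p.2) ↔
      (∀ p ∈ Prod.swap '' S, betaF p.1 ≤ betaM i p.2)) ∧
    ((∀ p ∈ S, betaM i p.1 ≤ betaF p.2) ↔
      (∀ p ∈ Prod.swap '' S, betaF p.1 ≤ betaP i p.2)) ∧
    ((∀ p ∈ S, betaP i p.1 ≤ betaM j p.2) ↔
      ((∀ p ∈ S, betaP i p.1 ≤ betaP j p.2) ∨ (∀ p ∈ S, betaM i p.1 ≤ betaM j p.2))) := by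
  obtain ⟨hne, hsub, hcl⟩ := hS
  have hneg : ∀ p ∈ S, (-p.1, -p.2) ∈ S := fun p hp => (hcl p hp p hp).2.2.1
  have habs : ∀ p ∈ S, (|p.1|, |p.2|) ∈ S := by
    intro p hp
    have h := (hcl p hp p hp).2.2.2
    rwa [simp_self, simp_self] at h
  have hZ : ∀ p ∈ S, p.1 ≠ 0 ∧ p.2 ≠ 0 := by
    intro p hp
    have h := hsub hp
    rw [Set.mem_prod] at h
    exact ⟨h.1.2, h.2.2⟩
  simp only [Set.forall_mem_image, betaP, betaM, betaF, indic_le, Prod.fst_swap, Prod.snd_swap]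
  refine ⟨⟨?_, ?_⟩, ⟨?_, ?_⟩, ⟨?_, ?_⟩, ⟨?_, ?_⟩⟩
  · intro h p hp
    have h1 := h _ (hneg p hp)
    simp only at h1
    omega
  · intro h p hp
    have h1 := h (hneg p hp)
    simp only at h1
    omega
  · intro h p hp
    have h1 := h _ (hneg p hp)
    simp only at h1
    omega
  · intro h p hp
    have h1 := h (hneg p hp)
    have hz := hZ p hp
    simp only at h1
    omega
  · intro h p hp
    have h1 := h _ (hneg p hp)
    simp only at h1
    omega
  · intro h p hp
    have h1 := h (hneg p hp)
    have hz := hZ p hp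
    simp only at h1
    omega
  · -- part (iii), forward
    intro h
    by_contra hc
    push_neg at hc
    obtain ⟨⟨pa, hpa, ha1, ha2⟩, ⟨pb, hpb, hb1, hb2⟩⟩ := hc
    -- pa : i < pa.1, ¬ j < pa.2 ; pb : -i ≤ pb.1, ¬ -j ≤ pb.2
    have ha3 : -(j:ℤ) ≤ pa.2 := h pa hpa ha1
    have ht := habs pa hpa
    have hs := hneg pb hpb
    have hw := (hcl _ ht _ hs).2.2.2
    simp only at hw
    have e1 : SImp |pa.1| (-pb.1) = min (-|pa.1|) (-pb.1) := by
      rw [SImp, if_neg]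
      have : |pa.1| = pa.1 := abs_of_pos (by omega)
      omega
    have e2 : SImp |pa.2| (-pb.2) = -pb.2 := by
      rw [SImp, if_pos]
      · have : -|pa.2| ≤ -pb.2 := by
          have := abs_nonneg pa.2
          omega
        exact max_eq_right this
      · have : |pa.2| ≤ (j:ℤ) := abs_le.mpr ⟨by omega, by omega⟩
        omega
    rw [e1, e2] at hw
    have hw' := hneg _ hw
    simp only at hw'
    have h2 := h _ hw'
    simp only at h2
    have hmin : min (-|pa.1|) (-pb.1) ≤ -|pa.1| := min_le_left _ _
    have habs1 : |pa.1| = pa.1 := abs_of_pos (by omega)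
    have h3 : -(j:ℤ) ≤ -pb.2 ∨ True := Or.inr trivial
    have h4 := h2 (by omega)
    omega
  · -- part (iii), backward
    rintro (h | h) p hp <;> intro h1 <;> have := h p hp <;> omega
end

section
/- Let n ≥ 1, let h be a partial endomorphism of Z_{2n}, and let 0 ≤ m ≤ n. Then: (i) h is injective, its inverse h⁻¹ : image(h) → dom h is a partial endomorphism of Z_{2n}, and the converse of the graph of h is the graph of h⁻¹; (ii) the set h ∘ ≈_m := {(x,y) ∈ Z_{2n} × Z_{2n} : x ∈ dom h and h(x) ≈_m y} is a subalgebra of Z_{2n}², i.e. nonempty and closed under the coordinatewise operations ∧, ∨, ¬, →. -/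
/-- The relation `≈_m`. -/
def eqm (m : ℕ) (a b : ℤ) : Prop := a = b ∨ (|a| ≤ (m : ℤ) ∧ |b| ≤ (m : ℤ))

lemma eqm_congr (m : ℕ) {u v x y : ℤ} (h1 : eqm m u x) (h2 : eqm m v y) :
    eqm m (min u v) (min x y) ∧ eqm m (max u v) (max x y) ∧ eqm m (-u) (-x) ∧
      eqm m (SImp u v) (SImp x y) := by
  unfold eqm SImp at *
  simp only [abs_le] at *
  refine ⟨by omega, by omega, by omega, ?_⟩
  split_ifs <;> omega

lemma zeven_ops (n : ℕ) {x y : ℤ} (hx : x ∈ Zeven n) (hy : y ∈ Zeven n) :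
    min x y ∈ Zeven n ∧ max x y ∈ Zeven n ∧ -x ∈ Zeven n ∧ SImp x y ∈ Zeven n := by
  simp only [Zeven, Set.mem_setOf_eq, SImp] at *
  refine ⟨by omega, by omega, by omega, ?_⟩
  split_ifs <;> omega

theorem stmt12 (n m : ℕ) (hn : 1 ≤ n) (hm : m ≤ n)
    (D : Set ℤ) (h : ℤ → ℤ) (hpe : PartialEnd (Zeven n) D h) :
    (Set.InjOn h D ∧
      ∃ h' : ℤ → ℤ, PartialEnd (Zeven n) (h '' D) h' ∧
        (∀ a ∈ D, h' (h a) = a) ∧ (∀ b ∈ h '' D, h (h' b) = b) ∧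
        Prod.swap '' {p : ℤ × ℤ | p.1 ∈ D ∧ p.2 = h p.1} =
          {p : ℤ × ℤ | p.1 ∈ h '' D ∧ p.2 = h' p.1}) ∧
    Subalg2 (Zeven n)
      {p : ℤ × ℤ | p.1 ∈ Zeven n ∧ p.2 ∈ Zeven n ∧ p.1 ∈ D ∧ eqm m (h p.1) p.2} := by
  obtain ⟨hD, hIm, hHom⟩ := hpe
  -- key injectivity fact
  have key : ∀ a ∈ D, ∀ b ∈ D, a < b → h a = h b → False := by
    intro a ha b hb hlt heq
    have h1 : h (SImp b a) = SImp (h a) (h a) := by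
      rw [(hHom.2 b hb a ha).2.2.2, heq]
    have hmem : SImp b a ∈ D := (hD.2.2 b hb a ha).2.2.2
    have h2 : h (-(SImp b a)) = -h (SImp b a) := (hHom.2 _ hmem _ hmem).2.2.1
    have h3 : -(SImp b a) = SImp a b := by
      unfold SImp; split_ifs <;> omega
    have h4 : h (SImp a b) = SImp (h a) (h a) := by
      rw [(hHom.2 a ha b hb).2.2.2, heq]
    rw [h3, h4, h1] at h2
    have hc : h a ∈ Zeven n := hIm.2.1 ⟨a, ha, rfl⟩
    simp only [Zeven, Set.mem_setOf_eq] at hc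
    unfold SImp at h2
    split_ifs at h2 <;> omega
  have hinj : Set.InjOn h D := by
    intro a ha b hb hab
    rcases lt_trichotomy a b with hlt | heq | hlt
    · exact absurd (key a ha b hb hlt hab) not_false
    · exact heq
    · exact absurd (key b hb a ha hlt hab.symm) not_false
  set h' := Function.invFunOn h D with hh'
  have hleft : ∀ a ∈ D, h' (h a) = a := fun a ha => hinj.leftInvOn_invFunOn ha
  have hmemD : ∀ b ∈ h '' D, h' b ∈ D := fun b hb => Function.invFunOn_mem hb
  have hright : ∀ b ∈ h '' D, h (h' b) = b := by
    rintro b ⟨a, ha, rfl⟩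
    rw [hleft a ha]
  have himg : h' '' (h '' D) = D := by
    ext x
    constructor
    · rintro ⟨b, hb, rfl⟩; exact hmemD b hb
    · intro hx; exact ⟨h x, ⟨x, hx, rfl⟩, hleft x hx⟩
  constructor
  · refine ⟨hinj, h', ⟨hIm, by rw [himg]; exact hD, ?_, ?_⟩, hleft, hright, ?_⟩
    · exact fun b hb => Set.mem_image_of_mem _ hb
    · rintro _ ⟨a, ha, rfl⟩ _ ⟨b, hb, rfl⟩
      obtain ⟨hmin, hmax, hneg, himp⟩ := hHom.2 a ha b hb
      obtain ⟨dmin, dmax, dneg, dimp⟩ := hD.2.2 a ha b hb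
      refine ⟨?_, ?_, ?_, ?_⟩
      · rw [hleft a ha, hleft b hb, ← hmin, hleft _ dmin]
      · rw [hleft a ha, hleft b hb, ← hmax, hleft _ dmax]
      · rw [hleft a ha, ← hneg, hleft _ dneg]
      · rw [hleft a ha, hleft b hb, ← himp, hleft _ dimp]
    · rw [Set.image_swap_eq_preimage_swap]
      ext ⟨x, y⟩
      simp only [Set.mem_preimage, Set.mem_setOf_eq, Prod.swap_prod_mk]
      constructor
      · rintro ⟨hy, rfl⟩
        exact ⟨⟨y, hy, rfl⟩, (hleft y hy).symm⟩
      · rintro ⟨hx, rfl⟩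
        exact ⟨hmemD x hx, (hright x hx).symm⟩
  · refine ⟨?_, ?_, ?_⟩
    · obtain ⟨a, ha⟩ := hD.1
      exact ⟨(a, h a), hD.2.1 ha, hIm.2.1 ⟨a, ha, rfl⟩, ha, Or.inl rfl⟩
    · rintro p ⟨h1, h2, -⟩
      exact Set.mem_prod.2 ⟨h1, h2⟩
    · rintro ⟨a, x⟩ ⟨haZ, hxZ, haD, hax⟩ ⟨b, y⟩ ⟨hbZ, hyZ, hbD, hby⟩
      obtain ⟨dmin, dmax, dneg, dimp⟩ := hD.2.2 a haD b hbD
      obtain ⟨emin, emax, eneg, eimp⟩ := hHom.2 a haD b hbD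
      obtain ⟨cmin, cmax, cneg, cimp⟩ := eqm_congr m hax hby
      obtain ⟨zmin, zmax, zneg, zimp⟩ := zeven_ops n hxZ hyZ
      refine ⟨⟨hD.2.1 dmin, zmin, dmin, by rw [emin]; exact cmin⟩,
        ⟨hD.2.1 dmax, zmax, dmax, by rw [emax]; exact cmax⟩,
        ⟨hD.2.1 dneg, zneg, dneg, by rw [eneg]; exact cneg⟩,
        ⟨hD.2.1 dimp, zimp, dimp, by rw [eimp]; exact cimp⟩⟩
end

section
/- Let n ≥ 1 and suppose φ : Y → Y satisfies: φ((0,…,0)) = (0,…,0), and for each e ∈ {f_0,…,f_n, g} and each 𝐮 ∈ Y all of whose coordinates lie in dom e, all coordinates of φ(𝐮) lie in dom e and φ(e·𝐮) = e·φ(𝐮), where e·𝐮 denotes the coordinatewise action. If 𝐛_{n+1} = (0,1,…,n) lies in the image of φ, then φ is the identity map on Y. -/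
/-- The underlying function of the partial endomorphism `f_i` of `Z_{2n+1}`. -/
def fOFun (i : ℕ) (a : ℤ) : ℤ :=
  if 2 ≤ i then
    (if a = (i : ℤ) - 1 then (i : ℤ) else if a = -((i : ℤ) - 1) then -(i : ℤ) else a)
  else a

/-- The domain of the partial endomorphism `f_i` of `Z_{2n+1}`. -/
def fODom (n i : ℕ) : Set ℤ := Zodd n \ {(i : ℤ), -(i : ℤ)}

/-- The maps `f_0, …, f_n, g` on `Z_{2n+1}`, as pairs (domain, function). -/
def MapsOdd (n : ℕ) : Set (Set ℤ × (ℤ → ℤ)) :=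
  {e | (∃ i : ℕ, i ≤ n ∧ e = (fODom n i, fOFun i)) ∨ e = (Zodd n, gOFun)}

/-- The test space `Y` for the odd case, as a set of `(n+1)`-tuples. -/
def YOdd (n : ℕ) : Set (Fin (n + 1) → ℤ) :=
  {u | (∀ i, u i ∈ Zodd n) ∧
    ∃ j : Fin (n + 1), 0 ≤ u j ∧ (∀ i, i ≤ j → u i = u j) ∧
      ∀ k l : Fin (n + 1), j ≤ k → k < l → u k < u l}

/-- The tuples `𝐛_1, …, 𝐛_{n+1}` in `Y` (odd case); here `1 ≤ k ≤ n+1`. -/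
def bOdd (n k : ℕ) : Fin (n + 1) → ℤ :=
  if k = n + 1 then fun p => ((p : ℕ) : ℤ)
  else fun p => max 1 (((p : ℕ) : ℤ) - ((n : ℤ) - (k : ℤ)))

lemma yodd_nonneg {n : ℕ} {u : Fin (n+1) → ℤ} (hu : u ∈ YOdd n) (p : Fin (n+1)) : 0 ≤ u p := by
  obtain ⟨hz, j, hj0, hplat, hstrict⟩ := hu
  rcases le_or_gt p j with h | h
  · rw [hplat p h]; exact hj0
  · exact le_of_lt (lt_of_le_of_lt hj0 (hstrict j p le_rfl h))

lemma yodd_mono {n : ℕ} {u : Fin (n+1) → ℤ} (hu : u ∈ YOdd n) :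
    ∀ k l : Fin (n+1), k ≤ l → u k ≤ u l := by
  obtain ⟨hz, j, hj0, hplat, hstrict⟩ := hu
  intro k l hkl
  rcases le_or_gt l j with h | h
  · rw [hplat k (le_trans hkl h), hplat l h]
  · rcases le_or_gt k j with h2 | h2
    · rw [hplat k h2]; exact le_of_lt (hstrict j l le_rfl h)
    · rcases eq_or_lt_of_le hkl with rfl | h3
      · exact le_rfl
      · exact le_of_lt (hstrict k l (le_of_lt h2) h3)

lemma strict_add {n : ℕ} {u : Fin (n+1) → ℤ} {j : Fin (n+1)}
    (hstrict : ∀ k l : Fin (n+1), j ≤ k → k < l → u k < u l) :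
    ∀ (d : ℕ) (k l : Fin (n+1)), j ≤ k → (l : ℕ) = (k : ℕ) + d → u k + d ≤ u l := by
  intro d
  induction d with
  | zero =>
    intro k l hk hl
    have : l = k := Fin.ext (by omega)
    subst this; simp
  | succ d ih =>
    intro k l hk hl
    have hk' : (k:ℕ) + d < n + 1 := by have := l.isLt; omega
    have h1 := ih k ⟨(k:ℕ)+d, hk'⟩ hk rfl
    have h2 : u ⟨(k:ℕ)+d, hk'⟩ < u l := by
      refine hstrict _ _ (le_trans hk ?_) ?_
      · simp [Fin.le_def]
      · simp [Fin.lt_def]; omega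
    push_cast
    push_cast at h1
    omega

lemma g_max (x : ℤ) : gOFun (max 0 x) = max 0 (x - 1) := by
  simp only [gOFun]
  split_ifs <;> omega

lemma maxfun_mem (n j : ℕ) : (fun p : Fin (n+1) => max 0 (((p:ℕ):ℤ) - (j:ℤ))) ∈ YOdd n := by
  refine ⟨fun p => ⟨?_, ?_⟩, ?_⟩
  · exact le_trans (by omega : -(n:ℤ) ≤ 0) (le_max_left 0 _)
  · have : ((p:ℕ):ℤ) ≤ (n:ℤ) := by exact_mod_cast Nat.lt_succ_iff.mp p.isLt
    simp only [max_le_iff]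
    omega
  · refine ⟨⟨min j n, by omega⟩, ?_, ?_, ?_⟩
    · exact le_max_left 0 _
    · intro i hi
      simp only [Fin.le_def] at hi
      have hi' : (i:ℕ) ≤ j := by omega
      have hmn : min j n ≤ j := Nat.min_le_left j n
      simp only
      rw [max_eq_left, max_eq_left] <;> push_cast <;> omega
    · intro k l hk hl
      simp only [Fin.le_def] at hk
      simp only [Fin.lt_def] at hl
      have hln := l.isLt
      have hkk : min j n ≤ (k:ℕ) := hk
      have : j ≤ (k:ℕ) := by omega
      simp only
      rw [max_eq_right (by omega), max_eq_right (by omega)]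
      push_cast
      omega

theorem stmt15 (n : ℕ) (hn : 1 ≤ n)
    (φ : (Fin (n + 1) → ℤ) → (Fin (n + 1) → ℤ))
    (hmap : ∀ u ∈ YOdd n, φ u ∈ YOdd n)
    (hzero : φ (fun _ => 0) = fun _ => 0)
    (hpres : ∀ e ∈ MapsOdd n, ∀ u ∈ YOdd n, (∀ p, u p ∈ e.1) →
      (∀ p, φ u p ∈ e.1) ∧ φ (fun p => e.2 (u p)) = fun p => e.2 (φ u p))
    (hsurj : ∃ u ∈ YOdd n, φ u = bOdd n (n + 1)) :
    ∀ u ∈ YOdd n, φ u = u := by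
  -- Step 1 : φ fixes b = (0,1,...,n)
  have step1 : φ (fun p : Fin (n+1) => ((p:ℕ):ℤ)) = fun p : Fin (n+1) => ((p:ℕ):ℤ) := by
    obtain ⟨u, hu, hub⟩ := hsurj
    have hb : bOdd n (n+1) = fun p : Fin (n+1) => ((p:ℕ):ℤ) := by
      simp [bOdd]
    rw [hb] at hub
    have hattain : ∀ i : ℕ, i ≤ n → ∃ p, u p = (i:ℤ) := by
      intro i hi
      by_contra hcon
      push_neg at hcon
      have hdom : ∀ p, u p ∈ fODom n i := by
        intro p
        refine ⟨hu.1 p, ?_⟩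
        intro hmem
        rcases hmem with h | h
        · exact hcon p h
        · have h1 := yodd_nonneg hu p
          simp only [Set.mem_singleton_iff] at h
          have : u p = (i:ℤ) := by omega
          exact hcon p this
      have hK := (hpres (fODom n i, fOFun i) (Or.inl ⟨i, hi, rfl⟩) u hu hdom).1
      have h2 := hK ⟨i, by omega⟩
      rw [hub] at h2
      simp only [Set.mem_diff, Set.mem_insert_iff, Set.mem_singleton_iff] at h2
      exact h2.2 (Or.inl rfl)
    have hmono := yodd_mono hu
    obtain ⟨hz, j, hj0, hplat, hstrict⟩ := id hu
    have hulast : u (Fin.last n) = (n:ℤ) := by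
      obtain ⟨p, hp⟩ := hattain n le_rfl
      have h1 : u p ≤ u (Fin.last n) := hmono p _ (Fin.le_last p)
      have h2 := (hz (Fin.last n)).2
      omega
    have hdesc : ∀ d i (_ : 1 ≤ i) (h2 : i ≤ n), n - i ≤ d → u ⟨i, by omega⟩ = (i:ℤ) := by
      intro d
      induction d with
      | zero =>
        intro i h1 h2 h3
        have : i = n := by omega
        subst this
        exact hulast
      | succ d ih =>
        intro i h1 h2 h3
        rcases le_or_gt (n - i) d with h4 | h4
        · exact ih i h1 h2 h4
        · have hiltn : i < n := by omega
          have hnext : u ⟨i+1, by omega⟩ = ((i+1 : ℕ):ℤ) := ih (i+1) (by omega) (by omega) (by omega)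
          obtain ⟨p, hp⟩ := hattain i h2
          -- find p' with j ≤ p' and u p' = i
          obtain ⟨p', hjp', hup'⟩ : ∃ p' : Fin (n+1), j ≤ p' ∧ u p' = (i:ℤ) := by
            rcases le_or_gt p j with hpj | hpj
            · exact ⟨j, le_rfl, by rw [← hplat p hpj]; exact hp⟩
            · exact ⟨p, le_of_lt hpj, hp⟩
          have hple : (p':ℕ) ≤ n := Nat.lt_succ_iff.mp p'.isLt
          have hup : u p' + ((n - (p':ℕ) : ℕ) : ℤ) ≤ u (Fin.last n) :=
            strict_add hstrict (n - (p':ℕ)) p' (Fin.last n) hjp' (by simp only [Fin.val_last]; omega)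
          have hpge : i ≤ (p':ℕ) := by
            rw [hup', hulast] at hup
            push_cast at hup
            omega
          have hplt : (p':ℕ) < i + 1 := by
            by_contra hcc
            push_neg at hcc
            have : u ⟨i+1, by omega⟩ ≤ u p' := hmono _ _ (by rw [Fin.le_def]; simp only [Fin.val_mk]; omega)
            rw [hnext, hup'] at this
            push_cast at this
            omega
          have : p' = ⟨i, by omega⟩ := Fin.ext (by simp only [Fin.val_mk]; omega)
          rw [← this]
          exact hup'
    have hu0 : u 0 = 0 := by
      obtain ⟨p, hp⟩ := hattain 0 (by omega)
      have h1 : u 0 ≤ u p := hmono _ _ (Fin.zero_le p)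
      have h2 := yodd_nonneg hu 0
      omega
    have hue : u = fun p : Fin (n+1) => ((p:ℕ):ℤ) := by
      funext p
      rcases Nat.eq_zero_or_pos (p:ℕ) with h | h
      · have : p = 0 := Fin.ext (by simpa using h)
        rw [this]
        simpa using hu0
      · have h2 : (p:ℕ) ≤ n := Nat.lt_succ_iff.mp p.isLt
        have := hdesc n (p:ℕ) h h2 (by omega)
        have hpp : (⟨(p:ℕ), by omega⟩ : Fin (n+1)) = p := Fin.ext rfl
        rwa [hpp] at this
    rw [hue] at hub
    exact hub
  -- hL1 : canonical tuples (0,...,0,1,2,...) are fixed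
  have hL1 : ∀ j : ℕ, j ≤ n →
      φ (fun p : Fin (n+1) => max 0 (((p:ℕ):ℤ) - (j:ℤ))) =
        fun p : Fin (n+1) => max 0 (((p:ℕ):ℤ) - (j:ℤ)) := by
    intro j
    induction j with
    | zero =>
      intro _
      have he : (fun p : Fin (n+1) => max 0 (((p:ℕ):ℤ) - ((0:ℕ):ℤ))) =
          fun p : Fin (n+1) => ((p:ℕ):ℤ) := by
        funext p
        simp
      rw [he]
      exact step1
    | succ j ih =>
      intro hj
      have ihj := ih (by omega)
      have hmem := maxfun_mem n j
      have h := (hpres (Zodd n, gOFun) (Or.inr rfl) _ hmem hmem.1).2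
      simp only at h
      rw [ihj] at h
      have hg : (fun p : Fin (n+1) => gOFun (max 0 (((p:ℕ):ℤ) - (j:ℤ)))) =
          fun p : Fin (n+1) => max 0 (((p:ℕ):ℤ) - ((j+1:ℕ):ℤ)) := by
        funext p
        rw [g_max]
        push_cast
        ring_nf
      rw [hg] at h
      exact h
  -- step3 : tuples with plateau value 0 are fixed
  have step3 : ∀ m : ℕ, ∀ v : Fin (n+1) → ℤ, v ∈ YOdd n → v 0 = 0 →
      (∑ p, (v p).toNat) = m → φ v = v := by
    intro m
    induction m using Nat.strong_induction_on with
    | _ m ih =>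
      intro v hv hv0 hm
      have hmono := yodd_mono hv
      have hnng := yodd_nonneg hv
      obtain ⟨hz, j, hj0, hplat, hstrict⟩ := id hv
      have hvj : v j = 0 := by rw [← hplat 0 (Fin.zero_le j)]; exact hv0
      by_cases hgap : ∃ k l : Fin (n+1), j ≤ k ∧ (l:ℕ) = (k:ℕ) + 1 ∧ v k + 2 ≤ v l
      · obtain ⟨k, l, hjk, hlk, hkl⟩ := hgap
        have hjl : j < l := lt_of_le_of_lt hjk (by rw [Fin.lt_def]; omega)
        set i : ℤ := v l with hidef
        have hi2 : 2 ≤ i := by have := hnng k; omega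
        have hin : i ≤ (n:ℤ) := (hz l).2
        set w : Fin (n+1) → ℤ := fun p => if p = l then i - 1 else v p with hwdef
        have hwl : w l = i - 1 := by simp [hwdef]
        have hwp : ∀ p, p ≠ l → w p = v p := by intro p hp; simp [hwdef, hp]
        have hvnei : ∀ p, p ≠ l → v p ≠ i := by
          intro p hp
          rcases le_or_gt p k with h | h
          · have := hmono p k h
            omega
          · have hlp : l < p := by rw [Fin.lt_def] at h ⊢; omega
            have := hstrict l p (le_of_lt hjl) hlp
            omega
        have hvnei1 : ∀ p, p ≠ l → v p ≠ i - 1 := by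
          intro p hp
          rcases le_or_gt p k with h | h
          · have := hmono p k h
            omega
          · have hlp : l < p := by rw [Fin.lt_def] at h ⊢; omega
            have := hstrict l p (le_of_lt hjl) hlp
            omega
        have hw : w ∈ YOdd n := by
          refine ⟨?_, j, ?_, ?_, ?_⟩
          · intro p
            by_cases hp : p = l
            · subst hp
              rw [hwl]
              exact ⟨by omega, by omega⟩
            · rw [hwp p hp]
              exact hz p
          · rw [hwp j (Fin.ne_of_lt hjl)]
            exact hj0
          · intro p hp
            rw [hwp j (Fin.ne_of_lt hjl), hwp p (Fin.ne_of_lt (lt_of_le_of_lt hp hjl))]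
            exact hplat p hp
          · intro a b hja hab
            by_cases ha : a = l
            · have hb : b ≠ l := by rw [← ha]; exact Fin.ne_of_gt hab
              rw [ha, hwl, hwp b hb]
              have h1 : j ≤ l := ha ▸ hja
              have h2 : l < b := ha ▸ hab
              have := hstrict l b h1 h2
              omega
            · by_cases hb : b = l
              · subst hb
                rw [hwl, hwp a ha]
                have hak : a ≤ k := by rw [Fin.le_def]; rw [Fin.lt_def] at hab; omega
                have := hmono a k hak
                omega
              · rw [hwp a ha, hwp b hb]
                exact hstrict a b hja hab
        have hw0 : w 0 = 0 := by
          rw [hwp 0 (Fin.ne_of_lt (lt_of_le_of_lt (Fin.zero_le j) hjl))]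
          exact hv0
        have hsum : (∑ p, (w p).toNat) < m := by
          rw [← hm]
          apply Finset.sum_lt_sum
          · intro p _
            by_cases hp : p = l
            · subst hp; rw [hwl]; omega
            · rw [hwp p hp]
          · exact ⟨l, Finset.mem_univ l, by rw [hwl]; omega⟩
        have hphw : φ w = w := ih _ hsum w hw hw0 rfl
        set iN : ℕ := i.toNat with hiN
        have hiNi : (iN:ℤ) = i := Int.toNat_of_nonneg (by omega)
        have hiNn : iN ≤ n := by omega
        have hiN2 : 2 ≤ iN := by omega
        have hwnn : ∀ p, 0 ≤ w p := by
          intro p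
          by_cases hp : p = l
          · subst hp; rw [hwl]; omega
          · rw [hwp p hp]; exact hnng p
        have hdom : ∀ p, w p ∈ fODom n iN := by
          intro p
          refine ⟨?_, ?_⟩
          · exact (hw.1 p)
          · simp only [Set.mem_insert_iff, Set.mem_singleton_iff]
            push_neg
            constructor
            · by_cases hp : p = l
              · subst hp; rw [hwl]; omega
              · rw [hwp p hp, hiNi]; exact hvnei p hp
            · have := hwnn p
              omega
        have hfw : (fun p => fOFun iN (w p)) = v := by
          funext p
          simp only [fOFun, if_pos hiN2]
          by_cases hp : p = l
          · subst hp
            rw [hwl, hiNi]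
            rw [if_pos (by ring)]
          · rw [hwp p hp]
            rw [if_neg, if_neg]
            · have := hnng p
              omega
            · rw [hiNi]
              exact hvnei1 p hp
        have hcomm := (hpres (fODom n iN, fOFun iN) (Or.inl ⟨iN, hiNn, rfl⟩) w hw hdom).2
        simp only at hcomm
        rw [hfw, hphw, hfw] at hcomm
        exact hcomm
      · -- no gap : v is canonical
        push_neg at hgap
        have hform : ∀ i : ℕ, ∀ (h : i < n+1), v ⟨i, h⟩ = max 0 ((i:ℤ) - ((j:ℕ):ℤ)) := by
          intro i
          induction i with
          | zero =>
            intro h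
            have h0 : (⟨0, h⟩ : Fin (n+1)) = 0 := rfl
            rw [h0, hv0]
            have : (0:ℤ) - ((j:ℕ):ℤ) ≤ 0 := by omega
            omega
          | succ i ihi =>
            intro h
            have hprev := ihi (by omega)
            rcases le_or_gt (i+1) (j:ℕ) with hle | hlt
            · have : (⟨i+1, h⟩ : Fin (n+1)) ≤ j := by rw [Fin.le_def]; simpa using hle
              rw [hplat _ this, hvj]
              omega
            · have hji : j ≤ (⟨i, by omega⟩ : Fin (n+1)) := by rw [Fin.le_def]; simp; omega
              have hs := hstrict ⟨i, by omega⟩ ⟨i+1, h⟩ hji (by rw [Fin.lt_def]; simp)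
              have hg2 := hgap ⟨i, by omega⟩ ⟨i+1, h⟩ hji (by simp)
              rw [hprev] at hs hg2
              have hmx : max 0 ((i:ℤ) - ((j:ℕ):ℤ)) = (i:ℤ) - ((j:ℕ):ℤ) := by
                rw [max_eq_right]; omega
              rw [hmx] at hs hg2
              rw [max_eq_right (by push_cast; omega)]
              push_cast
              push_cast at hs hg2
              omega
        have hve : v = fun p : Fin (n+1) => max 0 (((p:ℕ):ℤ) - ((j:ℕ):ℤ)) := by
          funext p
          have := hform (p:ℕ) p.isLt
          have hpp : (⟨(p:ℕ), p.isLt⟩ : Fin (n+1)) = p := Fin.ext rfl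
          rwa [hpp] at this
        rw [hve]
        exact hL1 (j:ℕ) (Nat.lt_succ_iff.mp j.isLt)
  -- step4 : induction on the plateau value
  have step4 : ∀ c : ℕ, ∀ v, v ∈ YOdd n → v 0 = (c:ℤ) → φ v = v := by
    intro c
    induction c with
    | zero =>
      intro v hv hv0
      exact step3 _ v hv (by exact_mod_cast hv0) rfl
    | succ c ihc =>
      intro v hv hv0
      have hmono := yodd_mono hv
      have hnng := yodd_nonneg hv
      obtain ⟨hz, j, hj0, hplat, hstrict⟩ := id hv
      have hlb : ∀ p, ((c:ℤ) + 1) ≤ v p := by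
        intro p
        have := hmono 0 p (Fin.zero_le p)
        push_cast at hv0
        omega
      have hcn : (c:ℤ) + 1 ≤ (n:ℤ) := by
        have := (hz 0).2
        push_cast at hv0
        omega
      set w : Fin (n+1) → ℤ := fun p => v p - 1 with hwdef
      have hw : w ∈ YOdd n := by
        refine ⟨fun p => ⟨?_, ?_⟩, j, ?_, ?_, ?_⟩
        · have := hlb p; simp only [hwdef]; omega
        · have := (hz p).2; simp only [hwdef]; omega
        · have := hlb j; simp only [hwdef]; omega
        · intro i hi
          simp only [hwdef]
          rw [hplat i hi]
        · intro k l hk hl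
          simp only [hwdef]
          have := hstrict k l hk hl
          omega
      have hw0 : w 0 = (c:ℤ) := by
        simp only [hwdef]
        push_cast at hv0
        omega
      have hphw : φ w = w := ihc w hw hw0
      have hgv : (fun p => gOFun (v p)) = w := by
        funext p
        have := hlb p
        simp only [gOFun, hwdef]
        rw [if_pos (by omega)]
      have hcomm := (hpres (Zodd n, gOFun) (Or.inr rfl) v hv hz).2
      simp only at hcomm
      rw [hgv, hphw] at hcomm
      -- hcomm : w = fun p => gOFun (φ v p)
      have hpnn := yodd_nonneg (hmap v hv)
      have hpavoid : ∀ p, (c:ℤ) + 1 ≤ φ v p := by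
        intro p
        have hne : ∀ a : ℕ, (a:ℤ) ≤ (c:ℤ) → φ v p ≠ (a:ℤ) := by
          intro a ha
          have hdom : ∀ q, v q ∈ fODom n a := by
            intro q
            refine ⟨hz q, ?_⟩
            simp only [Set.mem_insert_iff, Set.mem_singleton_iff]
            push_neg
            have := hlb q
            omega
          have hK := (hpres (fODom n a, fOFun a) (Or.inl ⟨a, by omega, rfl⟩) v hv hdom).1 p
          simp only [Set.mem_diff, Set.mem_insert_iff, Set.mem_singleton_iff] at hK
          exact fun hh => hK.2 (Or.inl hh)
        by_contra hcc
        push_neg at hcc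
        have h0 := hpnn p
        have := hne (φ v p).toNat (by omega)
        omega
      funext p
      have hc := congrFun hcomm p
      simp only [hwdef, gOFun] at hc
      rw [if_pos (by have := hpavoid p; omega)] at hc
      omega
  -- conclusion
  intro u hu
  have h0 := yodd_nonneg hu 0
  exact step4 (u 0).toNat u hu (Int.toNat_of_nonneg h0).symm
end
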